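/- arXiv:1012.3149 — 3 statements merged into one kernel-verified Lean document; each statement's English description precedes it below -/
import Mathlib

section
/- Let k be a field, N a positive integer, and R = k[[x_1,…,x_N]] the ring of formal power series in N variables over k. Let G be a finite group acting on R by local k-algebra automorphisms (k-algebra automorphisms mapping the maximal ideal m = (x_1,…,x_N) into itself), and assume the characteristic of k does not divide the order of G. Then there exist elements y_1,…,y_N ∈ m such that the k-algebra endomorphism of R determined by x_i ↦ y_i is an automorphism of R, and for every g ∈ G and every i the element g · y_i is a k-linear combination of y_1,…,y_N (i.e., G acts by linear substitutions in the new parameters y_1,…,y_N). -/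
open MvPowerSeries Finsupp
open scoped Classical

namespace LinearizationAux

variable {k : Type*} [Field k] {N : ℕ}

lemma degree_add' (a b : Fin N →₀ ℕ) : (a + b).degree = a.degree + b.degree := by
  simp only [Finsupp.degree_eq_weight_one, map_add]

lemma degree_single' (i : Fin N) (n : ℕ) : (Finsupp.single i n).degree = n := by
  simp [Finsupp.degree_eq_weight_one, Finsupp.weight_apply, Finsupp.sum_single_index]

/-- The finset of exponents of degree at most `n`. -/
noncomputable def D (N n : ℕ) : Finset (Fin N →₀ ℕ) :=
  (Finsupp.finite_of_degree_le n).toFinset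

lemma mem_D {n : ℕ} {d : Fin N →₀ ℕ} : d ∈ D N n ↔ d.degree ≤ n := by
  simp [D]


/-- Auxiliary decomposition: collect monomials of `f` whose least variable is `i`,
divided by `X i`. -/
noncomputable def hdec (f : MvPowerSeries (Fin N) k) (i : Fin N) : MvPowerSeries (Fin N) k :=
  fun e => if ∀ j < i, e j = 0 then coeff (e + single i 1) f else 0

lemma constantCoeff_hdec (f : MvPowerSeries (Fin N) k) (i : Fin N) :
    constantCoeff (hdec f i) = coeff (single i 1) f := by
  show hdec f i 0 = _
  simp [hdec]

lemma hdec_spec (f : MvPowerSeries (Fin N) k) (hf : constantCoeff f = 0) :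
    ∑ i, (X i : MvPowerSeries (Fin N) k) * hdec f i = f := by
  ext e
  rw [map_sum]
  have hX : ∀ i : Fin N, (X i : MvPowerSeries (Fin N) k) = monomial (single i 1) 1 := fun _ => rfl
  by_cases he : e = 0
  · subst he
    rw [← coeff_zero_eq_constantCoeff] at hf
    rw [hf]
    refine Finset.sum_eq_zero fun i _ => ?_
    rw [hX, coeff_monomial_mul, if_neg]
    intro h
    have := h i
    simp [Finsupp.single_le_iff] at this
  · -- e ≠ 0 : exactly the least element of the support contributes
    have hsupp : e.support.Nonempty := Finsupp.support_nonempty_iff.mpr he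
    set i₀ := e.support.min' hsupp with hi₀
    have hi₀mem : i₀ ∈ e.support := e.support.min'_mem hsupp
    have hi₀ne : e i₀ ≠ 0 := Finsupp.mem_support_iff.mp hi₀mem
    have hlt : ∀ j < i₀, e j = 0 := by
      intro j hj
      by_contra hj0
      exact absurd (e.support.min'_le j (Finsupp.mem_support_iff.mpr hj0)) (not_le.mpr hj)
    rw [Finset.sum_eq_single i₀]
    · rw [hX, coeff_monomial_mul, if_pos (Finsupp.single_le_iff.mpr (Nat.one_le_iff_ne_zero.mpr hi₀ne)), one_mul]
      show hdec f i₀ (e - single i₀ 1) = _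
      rw [hdec, if_pos, tsub_add_cancel_of_le (Finsupp.single_le_iff.mpr (Nat.one_le_iff_ne_zero.mpr hi₀ne))]
      intro j hj
      simp [Finsupp.tsub_apply, hlt j hj]
    · intro i _ hne
      rw [hX, coeff_monomial_mul]
      split_ifs with hle
      · rw [one_mul]
        show hdec f i (e - single i 1) = 0
        rw [hdec, if_neg]
        intro hcond
        -- i ≠ i₀, single i 1 ≤ e means e i ≥ 1 so i ∈ support, hence i₀ ≤ i, so i₀ < i
        have hi : e i ≠ 0 := by
          have := Finsupp.single_le_iff.mp hle
          omega
        have hi₀le : i₀ ≤ i := e.support.min'_le i (Finsupp.mem_support_iff.mpr hi)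
        have hi₀lt : i₀ < i := lt_of_le_of_ne hi₀le (Ne.symm hne)
        have := hcond i₀ hi₀lt
        rw [Finsupp.tsub_apply] at this
        have : e i₀ = 0 := by
          have hs : (single i 1) i₀ = 0 := by
            rw [Finsupp.single_apply_eq_zero]; intro h; exact absurd h (ne_of_lt hi₀lt)
          omega
        exact hi₀ne this
      · rfl
    · intro h
      exact absurd (Finset.mem_univ i₀) h


/-- The maximal ideal. -/
noncomputable def mm (k : Type*) [Field k] (N : ℕ) : Ideal (MvPowerSeries (Fin N) k) :=
  Ideal.span (Set.range (X : Fin N → MvPowerSeries (Fin N) k))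

lemma span_X_eq_ker :
    mm k N = RingHom.ker (constantCoeff) := by
  apply le_antisymm
  · rw [mm, Ideal.span_le]
    rintro _ ⟨i, rfl⟩
    simp [RingHom.mem_ker]
  · intro f hf
    rw [RingHom.mem_ker] at hf
    rw [← hdec_spec f hf]
    exact Ideal.sum_mem _ fun i _ =>
      Ideal.mul_mem_right _ _ (Ideal.subset_span ⟨i, rfl⟩)

lemma mem_mm_iff {f : MvPowerSeries (Fin N) k} :
    f ∈ mm k N ↔ constantCoeff f = 0 := by
  rw [span_X_eq_ker, RingHom.mem_ker]

/-- Elements of `m ^ n` have no coefficients below degree `n`. -/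
lemma coeff_eq_zero_of_mem_pow :
    ∀ (n : ℕ) (f : MvPowerSeries (Fin N) k), f ∈ (mm k N) ^ n →
      ∀ e : Fin N →₀ ℕ, e.degree < n → coeff e f = 0 := by
  intro n
  induction n with
  | zero => intro f _ e he; omega
  | succ n ih =>
    intro f hf e he
    rw [pow_succ] at hf
    induction hf using Submodule.mul_induction_on' with
    | mem_mul_mem a ha b hb =>
      rw [coeff_mul]
      refine Finset.sum_eq_zero fun p hp => ?_
      rw [Finset.HasAntidiagonal.mem_antidiagonal] at hp
      by_cases h2 : p.2 = 0
      · have : constantCoeff b = 0 := mem_mm_iff.mp hb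
        rw [h2, coeff_zero_eq_constantCoeff_apply, this, mul_zero]
      · have hdeg : p.1.degree + p.2.degree = e.degree := by
          rw [← degree_add', hp]
        have h2' : 1 ≤ p.2.degree :=
          Nat.one_le_iff_ne_zero.mpr (fun h => h2 ((degree_eq_zero_iff _).mp h))
        have : p.1.degree < n := by omega
        rw [ih a ha p.1 this, zero_mul]
    | add x hx y hy ihx ihy =>
      rw [map_add, ihx, ihy, add_zero]

lemma prod_pow_mem (u : Fin N → MvPowerSeries (Fin N) k) (hu : ∀ i, u i ∈ mm k N)
    (d : Fin N →₀ ℕ) (s : Finset (Fin N)) :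
    (∏ i ∈ s, u i ^ d i) ∈ (mm k N) ^ (∑ i ∈ s, d i) := by
  induction s using Finset.induction with
  | empty => simp [Ideal.one_eq_top]
  | insert a s hns ih =>
    rw [Finset.prod_insert hns, Finset.sum_insert hns, pow_add]
    exact Ideal.mul_mem_mul (Ideal.pow_mem_pow (hu a) _) ih

lemma degree_eq_sum_univ (d : Fin N →₀ ℕ) : d.degree = ∑ i, d i := by
  rw [Finsupp.degree]
  exact Finset.sum_subset (Finset.subset_univ _)
    (fun x _ hx => Finsupp.notMem_support_iff.mp hx)

lemma sub_pow_mem {a b : MvPowerSeries (Fin N) k} (ha : a ∈ mm k N) (hb : b ∈ mm k N)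
    (hab : a - b ∈ (mm k N) ^ 2) (n : ℕ) : a ^ n - b ^ n ∈ (mm k N) ^ (n + 1) := by
  induction n with
  | zero => simp
  | succ n ih =>
    have : a ^ (n+1) - b ^ (n+1) = a * (a ^ n - b ^ n) + (a - b) * b ^ n := by ring
    rw [this]
    refine Ideal.add_mem _ ?_ ?_
    · have := Ideal.mul_mem_mul ha ih
      rwa [← pow_succ'] at this
    · have := Ideal.mul_mem_mul hab (Ideal.pow_mem_pow hb n)
      rwa [← pow_add, show 2 + n = n + 1 + 1 by omega] at this


/-- `Y y d = ∏ yᵢ^{dᵢ}`. -/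
noncomputable def Y (y : Fin N → MvPowerSeries (Fin N) k) (d : Fin N →₀ ℕ) :
    MvPowerSeries (Fin N) k :=
  ∏ i, y i ^ d i

lemma Y_add (y : Fin N → MvPowerSeries (Fin N) k) (d₁ d₂ : Fin N →₀ ℕ) :
    Y y (d₁ + d₂) = Y y d₁ * Y y d₂ := by
  rw [Y, Y, Y, ← Finset.prod_mul_distrib]
  exact Finset.prod_congr rfl fun i _ => by simp [pow_add]

lemma Y_zero (y : Fin N → MvPowerSeries (Fin N) k) : Y y 0 = 1 := by simp [Y]

lemma Y_single (y : Fin N → MvPowerSeries (Fin N) k) (i : Fin N) :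
    Y y (single i 1) = y i := by
  rw [Y, Finset.prod_eq_single i]
  · simp
  · intro j _ hj; rw [Finsupp.single_eq_of_ne' (Ne.symm hj), pow_zero]
  · intro h; exact absurd (Finset.mem_univ i) h

lemma Y_mem_pow (y : Fin N → MvPowerSeries (Fin N) k) (hy : ∀ i, y i ∈ mm k N)
    (d : Fin N →₀ ℕ) : Y y d ∈ (mm k N) ^ d.degree := by
  rw [degree_eq_sum_univ]
  exact prod_pow_mem y hy d Finset.univ

lemma prod_monomial_single (v : Fin N → ℕ) (s : Finset (Fin N)) :
    (∏ i ∈ s, monomial (single i (v i)) (1 : k))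
      = monomial (∑ i ∈ s, single i (v i)) 1 := by
  induction s using Finset.induction with
  | empty => simp
  | insert a s hns ih =>
    rw [Finset.prod_insert hns, Finset.sum_insert hns, ih, monomial_mul_monomial, one_mul]

lemma X_prod_eq_monomial (d : Fin N →₀ ℕ) :
    Y (X : Fin N → MvPowerSeries (Fin N) k) d = monomial d 1 := by
  rw [Y]
  rw [Finset.prod_congr rfl fun i _ => X_pow_eq i (d i), prod_monomial_single,
    Finsupp.univ_sum_single]

section S4

variable (y : Fin N → MvPowerSeries (Fin N) k)
  (hy : ∀ i, y i ∈ mm k N)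
  (hyX : ∀ i, y i - X i ∈ (mm k N) ^ 2)

include hy hyX in
lemma Y_sub_X_pow_mem (d : Fin N →₀ ℕ) (s : Finset (Fin N)) :
    (∏ i ∈ s, y i ^ d i) - (∏ i ∈ s, (X i : MvPowerSeries (Fin N) k) ^ d i)
      ∈ (mm k N) ^ ((∑ i ∈ s, d i) + 1) := by
  induction s using Finset.induction with
  | empty => simp
  | insert a s hns ih =>
    rw [Finset.prod_insert hns, Finset.prod_insert hns, Finset.sum_insert hns]
    have hXm : ∀ i, (X i : MvPowerSeries (Fin N) k) ∈ mm k N :=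
      fun i => Ideal.subset_span ⟨i, rfl⟩
    have key : y a ^ d a * ∏ i ∈ s, y i ^ d i
        - (X a : MvPowerSeries (Fin N) k) ^ d a * ∏ i ∈ s, (X i : MvPowerSeries (Fin N) k) ^ d i
        = y a ^ d a * ((∏ i ∈ s, y i ^ d i) - ∏ i ∈ s, (X i : MvPowerSeries (Fin N) k) ^ d i)
          + (y a ^ d a - (X a : MvPowerSeries (Fin N) k) ^ d a)
            * ∏ i ∈ s, (X i : MvPowerSeries (Fin N) k) ^ d i := by ring
    rw [key]
    refine Ideal.add_mem _ ?_ ?_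
    · have := Ideal.mul_mem_mul (Ideal.pow_mem_pow (hy a) (d a)) ih
      rwa [← pow_add, show d a + ((∑ i ∈ s, d i) + 1) = (d a + ∑ i ∈ s, d i) + 1 by omega] at this
    · have h1 : y a ^ d a - (X a : MvPowerSeries (Fin N) k) ^ d a ∈ (mm k N) ^ (d a + 1) :=
        sub_pow_mem (hy a) (hXm a) (hyX a) (d a)
      have h2 := prod_pow_mem (X : Fin N → MvPowerSeries (Fin N) k) hXm d s
      have := Ideal.mul_mem_mul h1 h2
      rwa [← pow_add, show d a + 1 + ∑ i ∈ s, d i = (d a + ∑ i ∈ s, d i) + 1 by omega] at this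

include hy hyX in
/-- Triangularity: in degrees up to `deg d`, `Y y d` looks like the monomial `X^d`. -/
lemma coeff_Y (d e : Fin N →₀ ℕ) (h : e.degree ≤ d.degree) :
    coeff e (Y y d) = if d = e then 1 else 0 := by
  have h1 : coeff e (Y y d - Y (X : Fin N → MvPowerSeries (Fin N) k) d) = 0 := by
    apply coeff_eq_zero_of_mem_pow (d.degree + 1)
    · have := Y_sub_X_pow_mem y hy hyX d Finset.univ
      rwa [← degree_eq_sum_univ] at this
    · omega
  rw [map_sub, sub_eq_zero] at h1
  rw [h1, X_prod_eq_monomial, coeff_monomial]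
  by_cases hde : d = e <;> simp [hde]
  intro h'; exact hde h'.symm

include hy in
lemma coeff_Y_zero_of_lt (d e : Fin N →₀ ℕ) (h : e.degree < d.degree) :
    coeff e (Y y d) = 0 :=
  coeff_eq_zero_of_mem_pow d.degree (Y y d) (Y_mem_pow y hy d) e h


end S4

section Subst

variable (y : Fin N → MvPowerSeries (Fin N) k)

/-- The substitution `f ↦ f(y)`, defined coefficientwise. -/
noncomputable def Sfun (f : MvPowerSeries (Fin N) k) : MvPowerSeries (Fin N) k :=
  fun e => ∑ d ∈ D N e.degree, coeff d f * coeff e (Y y d)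

lemma coeff_Sfun (f : MvPowerSeries (Fin N) k) (e : Fin N →₀ ℕ) :
    coeff e (Sfun y f) = ∑ d ∈ D N e.degree, coeff d f * coeff e (Y y d) := rfl

variable (hy : ∀ i, y i ∈ mm k N) (hyX : ∀ i, y i - X i ∈ (mm k N) ^ 2)

include hy in
lemma coeff_Sfun_extend (f : MvPowerSeries (Fin N) k) (e : Fin N →₀ ℕ) (n : ℕ)
    (h : e.degree ≤ n) :
    coeff e (Sfun y f) = ∑ d ∈ D N n, coeff d f * coeff e (Y y d) := by
  rw [coeff_Sfun]
  apply Finset.sum_subset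
  · intro d hd; rw [mem_D] at *; omega
  · intro d hd hnd
    rw [mem_D] at hd hnd
    rw [coeff_Y_zero_of_lt y hy d e (by omega), mul_zero]

include hy in
lemma Sfun_mul (f g : MvPowerSeries (Fin N) k) :
    Sfun y (f * g) = Sfun y f * Sfun y g := by
  ext e
  set n := e.degree with hn
  have hdisj : (↑(D N n) : Set (Fin N →₀ ℕ)).PairwiseDisjoint Finset.HasAntidiagonal.antidiagonal := by
    intro d1 _ d2 _ hne
    simp only [Function.onFun]
    rw [Finset.disjoint_left]
    intro q hq1 hq2
    rw [Finset.HasAntidiagonal.mem_antidiagonal] at hq1 hq2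
    exact hne (hq1 ▸ hq2)
  have hsets : (D N n).biUnion Finset.HasAntidiagonal.antidiagonal
      = ((D N n) ×ˢ (D N n)).filter (fun q => (q.1 + q.2).degree ≤ n) := by
    ext q
    simp only [Finset.mem_biUnion, Finset.mem_filter, Finset.mem_product,
      Finset.HasAntidiagonal.mem_antidiagonal]
    constructor
    · rintro ⟨d, hd, rfl⟩
      rw [mem_D] at hd
      have := degree_add' q.1 q.2
      exact ⟨⟨mem_D.mpr (by omega), mem_D.mpr (by omega)⟩, by omega⟩
    · rintro ⟨-, hdeg⟩
      exact ⟨q.1 + q.2, mem_D.mpr hdeg, rfl⟩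
  -- LHS
  have LHS : coeff e (Sfun y (f * g))
      = ∑ q ∈ (D N n) ×ˢ (D N n),
          coeff q.1 f * coeff q.2 g * coeff e (Y y (q.1 + q.2)) := by
    rw [coeff_Sfun]
    have step1 : ∀ d ∈ D N n, coeff d (f * g) * coeff e (Y y d)
        = ∑ q ∈ Finset.HasAntidiagonal.antidiagonal d,
            coeff q.1 f * coeff q.2 g * coeff e (Y y (q.1 + q.2)) := by
      intro d _
      rw [coeff_mul, Finset.sum_mul]
      refine Finset.sum_congr rfl fun q hq => ?_
      rw [Finset.HasAntidiagonal.mem_antidiagonal] at hq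
      rw [hq]
    rw [Finset.sum_congr rfl step1, ← Finset.sum_biUnion hdisj, hsets]
    apply Finset.sum_subset (Finset.filter_subset _ _)
    intro q hq hnq
    rw [Finset.mem_filter] at hnq
    push_neg at hnq
    have := hnq hq
    rw [coeff_Y_zero_of_lt y hy _ e (by omega), mul_zero]
  -- RHS
  have RHS : coeff e (Sfun y f * Sfun y g)
      = ∑ q ∈ (D N n) ×ˢ (D N n),
          coeff q.1 f * coeff q.2 g * coeff e (Y y (q.1 + q.2)) := by
    rw [coeff_mul]
    have step1 : ∀ p ∈ Finset.HasAntidiagonal.antidiagonal e,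
        coeff p.1 (Sfun y f) * coeff p.2 (Sfun y g)
        = ∑ d1 ∈ D N n, ∑ d2 ∈ D N n,
            (coeff d1 f * coeff p.1 (Y y d1)) * (coeff d2 g * coeff p.2 (Y y d2)) := by
      intro p hp
      rw [Finset.HasAntidiagonal.mem_antidiagonal] at hp
      have h1 : p.1.degree ≤ n := by
        have := degree_add' p.1 p.2; rw [hp] at this; omega
      have h2 : p.2.degree ≤ n := by
        have := degree_add' p.1 p.2; rw [hp] at this; omega
      rw [coeff_Sfun_extend y hy f p.1 n h1, coeff_Sfun_extend y hy g p.2 n h2,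
        Finset.sum_mul_sum]
    rw [Finset.sum_congr rfl step1, Finset.sum_comm, Finset.sum_product]
    refine Finset.sum_congr rfl fun d1 _ => ?_
    rw [Finset.sum_comm]
    refine Finset.sum_congr rfl fun d2 _ => ?_
    rw [Y_add, coeff_mul, Finset.mul_sum]
    exact Finset.sum_congr rfl fun p _ => by ring
  exact LHS.trans RHS.symm

lemma Sfun_one : Sfun y (1 : MvPowerSeries (Fin N) k) = 1 := by
  ext e
  show coeff e (Sfun y 1) = coeff e 1
  rw [coeff_Sfun, Finset.sum_eq_single (0 : Fin N →₀ ℕ)]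
  · rw [coeff_one, if_pos rfl, Y_zero, one_mul]
  · intro d _ hd
    rw [coeff_one, if_neg hd, zero_mul]
  · intro h
    exact absurd (mem_D.mpr (by simp)) h

lemma Sfun_add (f g : MvPowerSeries (Fin N) k) :
    Sfun y (f + g) = Sfun y f + Sfun y g := by
  ext e
  show coeff e _ = coeff e _
  rw [map_add, coeff_Sfun, coeff_Sfun, coeff_Sfun, ← Finset.sum_add_distrib]
  refine Finset.sum_congr rfl fun d _ => ?_
  rw [map_add, add_mul]

lemma Sfun_zero : Sfun y (0 : MvPowerSeries (Fin N) k) = 0 := by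
  ext e
  show coeff e _ = coeff e _
  rw [coeff_Sfun]
  simp

lemma Sfun_smul (c : k) (f : MvPowerSeries (Fin N) k) :
    Sfun y (c • f) = c • Sfun y f := by
  ext e
  show coeff e _ = coeff e _
  rw [coeff_smul, coeff_Sfun, coeff_Sfun, Finset.mul_sum]
  refine Finset.sum_congr rfl fun d _ => ?_
  rw [coeff_smul, mul_assoc]

omit hy in
lemma Sfun_X (hy0 : ∀ i, constantCoeff (y i) = 0) (i : Fin N) :
    Sfun y (X i) = y i := by
  ext e
  show coeff e _ = coeff e _
  rw [coeff_Sfun]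
  by_cases h1 : (single i 1 : Fin N →₀ ℕ) ∈ D N e.degree
  · rw [Finset.sum_eq_single (single i 1 : Fin N →₀ ℕ)]
    · rw [coeff_X, if_pos rfl, one_mul, Y_single]
    · intro d _ hd
      rw [coeff_X, if_neg hd, zero_mul]
    · intro h; exact absurd h1 h
  · -- degree e = 0, so e = 0
    rw [mem_D, degree_single'] at h1
    have he : e = 0 := by
      have : e.degree = 0 := by omega
      exact (degree_eq_zero_iff e).mp this
    subst he
    rw [coeff_zero_eq_constantCoeff_apply, hy0 i]
    refine (Finset.sum_eq_zero fun d hd => ?_)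
    rw [mem_D] at hd
    have hd0 : d = 0 := (degree_eq_zero_iff d).mp (by omega)
    subst hd0
    rw [coeff_X, if_neg, zero_mul]
    intro h
    exact one_ne_zero ((Finsupp.single_eq_zero).mp h.symm)

/-- The substitution as a ring homomorphism. -/
noncomputable def SRing (hy : ∀ i, y i ∈ mm k N) :
    MvPowerSeries (Fin N) k →+* MvPowerSeries (Fin N) k where
  toFun := Sfun y
  map_one' := Sfun_one y
  map_mul' := Sfun_mul y hy
  map_zero' := Sfun_zero y
  map_add' := Sfun_add y

/-- The substitution as a `k`-algebra homomorphism. -/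
noncomputable def SAlg (hy : ∀ i, y i ∈ mm k N) :
    MvPowerSeries (Fin N) k →ₐ[k] MvPowerSeries (Fin N) k :=
  AlgHom.mk' (SRing y hy) (Sfun_smul y)

lemma SAlg_apply (f : MvPowerSeries (Fin N) k) : SAlg y hy f = Sfun y f := rfl

end Subst


section Bij

variable (y : Fin N → MvPowerSeries (Fin N) k)
  (hy : ∀ i, y i ∈ mm k N) (hyX : ∀ i, y i - X i ∈ (mm k N) ^ 2)

include hy hyX in
lemma coeff_Sfun_eq_self (f : MvPowerSeries (Fin N) k) (e : Fin N →₀ ℕ)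
    (hmin : ∀ d : Fin N →₀ ℕ, d.degree < e.degree → coeff d f = 0) :
    coeff e (Sfun y f) = coeff e f := by
  rw [coeff_Sfun, Finset.sum_eq_single e]
  · rw [coeff_Y y hy hyX e e le_rfl, if_pos rfl, mul_one]
  · intro d hd hne
    by_cases hlt : d.degree < e.degree
    · rw [hmin d hlt, zero_mul]
    · rw [coeff_Y y hy hyX d e (by omega), if_neg hne, mul_zero]
  · intro h
    exact absurd (mem_D.mpr le_rfl) h

include hy hyX in
lemma Sfun_injective0 (f : MvPowerSeries (Fin N) k) (hf : Sfun y f = 0) : f = 0 := by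
  by_contra hne
  have hex : ∃ e : Fin N →₀ ℕ, coeff e f ≠ 0 := by
    by_contra h
    push_neg at h
    exact hne (MvPowerSeries.ext h)
  set T : Set ℕ := {n | ∃ e : Fin N →₀ ℕ, e.degree = n ∧ coeff e f ≠ 0} with hT
  have hTne : T.Nonempty := by
    obtain ⟨e, he⟩ := hex
    exact ⟨e.degree, e, rfl, he⟩
  obtain ⟨e, hedeg, hene⟩ := Nat.sInf_mem hTne
  have hmin : ∀ d : Fin N →₀ ℕ, d.degree < e.degree → coeff d f = 0 := by
    intro d hd
    by_contra hd0
    have : d.degree ∈ T := ⟨d, rfl, hd0⟩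
    have := Nat.sInf_le this
    omega
  have := coeff_Sfun_eq_self y hy hyX f e hmin
  rw [hf, map_zero] at this
  exact hene this.symm

/-- Recursive construction of a preimage under substitution. -/
noncomputable def invC (y : Fin N → MvPowerSeries (Fin N) k)
    (t : MvPowerSeries (Fin N) k) : (Fin N →₀ ℕ) → k
  | e => coeff e t - ∑ d ∈ (D N e.degree).attach,
      if h : d.1.degree < e.degree then invC y t d.1 * coeff e (Y y d.1) else 0
  termination_by e => e.degree
  decreasing_by exact h

lemma invC_spec (t : MvPowerSeries (Fin N) k) (e : Fin N →₀ ℕ) :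
    invC y t e = coeff e t
      - ∑ d ∈ (D N e.degree).filter (fun d => d.degree < e.degree),
          invC y t d * coeff e (Y y d) := by
  rw [invC]
  congr 1
  simp only [dite_eq_ite]
  rw [Finset.sum_attach (D N e.degree)
    (fun d => if d.degree < e.degree then invC y t d * coeff e (Y y d) else 0),
    Finset.sum_filter]

include hy hyX in
lemma Sfun_surjective : Function.Surjective (Sfun y) := by
  intro t
  refine ⟨(@id (MvPowerSeries (Fin N) k) (invC y t)), MvPowerSeries.ext fun e => ?_⟩
  have hc : ∀ d, coeff d ((@id (MvPowerSeries (Fin N) k) (invC y t))) = invC y t d :=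
    fun d => rfl
  rw [coeff_Sfun, ← Finset.sum_filter_add_sum_filter_not (D N e.degree)
    (fun d => d.degree < e.degree)]
  have h2 : ∑ d ∈ (D N e.degree).filter (fun d => ¬ d.degree < e.degree),
      coeff d ((@id (MvPowerSeries (Fin N) k) (invC y t))) * coeff e (Y y d)
      = invC y t e := by
    rw [Finset.sum_eq_single e]
    · rw [hc, coeff_Y y hy hyX e e le_rfl, if_pos rfl, mul_one]
    · intro d hd hne
      rw [Finset.mem_filter, mem_D] at hd
      rw [coeff_Y y hy hyX d e (by omega), if_neg hne, mul_zero]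
    · intro h
      rw [Finset.mem_filter] at h
      push_neg at h
      exact absurd (by omega : ¬ e.degree < e.degree) (by simpa using h (mem_D.mpr le_rfl))
  rw [h2, invC_spec]
  have : ∑ d ∈ (D N e.degree).filter (fun d => d.degree < e.degree),
      coeff d ((@id (MvPowerSeries (Fin N) k) (invC y t))) * coeff e (Y y d)
      = ∑ d ∈ (D N e.degree).filter (fun d => d.degree < e.degree),
          invC y t d * coeff e (Y y d) := rfl
  rw [this]
  ring

end Bij


lemma X_mem_mm (i : Fin N) : (X i : MvPowerSeries (Fin N) k) ∈ mm k N :=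
  Ideal.subset_span ⟨i, rfl⟩

lemma coeff_single_X (i j : Fin N) :
    coeff (single i 1) (X j : MvPowerSeries (Fin N) k) = if i = j then 1 else 0 := by
  rw [coeff_X]
  by_cases h : i = j
  · subst h; simp
  · rw [if_neg, if_neg h]
    intro hc
    exact h (Finsupp.single_left_injective one_ne_zero hc)

lemma coeff_single_mul (u v : MvPowerSeries (Fin N) k)
    (hv : constantCoeff v = 0) (i : Fin N) :
    coeff (single i 1) (u * v)
      = constantCoeff u * coeff (single i 1) v := by
  rw [coeff_mul, Finset.sum_eq_single ((0 : Fin N →₀ ℕ), single i 1)]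
  · rw [coeff_zero_eq_constantCoeff_apply]
  · intro p hp hne
    rw [Finset.HasAntidiagonal.mem_antidiagonal] at hp
    by_cases h1 : p.1 = 0
    · exact absurd (Prod.ext h1 (by rw [← hp, h1, zero_add])) hne
    · have hd : p.1.degree + p.2.degree = 1 := by
        rw [← degree_add', hp, degree_single']
      have h1' : 1 ≤ p.1.degree :=
        Nat.one_le_iff_ne_zero.mpr (fun h => h1 ((degree_eq_zero_iff _).mp h))
      have h2 : p.2 = 0 := (degree_eq_zero_iff _).mp (by omega)
      rw [h2, coeff_zero_eq_constantCoeff_apply, hv, mul_zero]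
  · intro h
    exact absurd (Finset.HasAntidiagonal.mem_antidiagonal.mpr (zero_add _)) h

section Group

variable {G : Type*} [Group G]
  (ρ : G →* (MvPowerSeries (Fin N) k ≃ₐ[k] MvPowerSeries (Fin N) k))
  (hloc : ∀ g : G, ∀ f ∈ mm k N, ρ g f ∈ mm k N)

/-- The matrix of the linear part of `ρ g`. -/
noncomputable def amat (g : G) (i j : Fin N) : k :=
  coeff (single i 1) (ρ g (X j))

include hloc in
lemma constantCoeff_rho (g : G) (f : MvPowerSeries (Fin N) k) :
    constantCoeff (ρ g f) = constantCoeff f := by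
  set c := constantCoeff f with hc
  have hmem : f - C c ∈ mm k N := by
    rw [mem_mm_iff, map_sub, constantCoeff_C, sub_self]
  have h1 : ρ g (C c) = C c := by
    rw [c_eq_algebraMap]
    exact (ρ g).commutes c
  have : ρ g f = ρ g (f - C c) + ρ g (C c) := by
    rw [← map_add]
    congr 1
    ring
  rw [this, h1, map_add, mem_mm_iff.mp (hloc g _ hmem), zero_add, constantCoeff_C]

include hloc in
lemma lin_coeff (g : G) (f : MvPowerSeries (Fin N) k) (hf : f ∈ mm k N) (i : Fin N) :
    coeff (single i 1) (ρ g f)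
      = ∑ j, amat ρ g i j * coeff (single j 1) f := by
  obtain ⟨h, rfl⟩ := Ideal.mem_span_range_iff_exists_fun.mp hf
  rw [map_sum, map_sum]
  have key : ∀ j : Fin N, coeff (single i 1) (ρ g (h j * X j))
      = constantCoeff (h j) * amat ρ g i j := by
    intro j
    rw [map_mul]
    rw [coeff_single_mul _ _ (mem_mm_iff.mp (hloc g _ (X_mem_mm j))),
      constantCoeff_rho ρ hloc]
    rfl
  rw [Finset.sum_congr rfl fun j _ => key j]
  refine Finset.sum_congr rfl fun j _ => ?_
  have : coeff (single j 1) (∑ l, h l * X l) = constantCoeff (h j) := by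
    rw [map_sum, Finset.sum_eq_single j]
    · rw [coeff_single_mul _ _ (constantCoeff_X j), coeff_single_X, if_pos rfl, mul_one]
    · intro l _ hne
      rw [coeff_single_mul _ _ (constantCoeff_X l), coeff_single_X, if_neg (fun hh => hne hh.symm), mul_zero]
    · intro hj; exact absurd (Finset.mem_univ j) hj
  rw [this, mul_comm]

include hloc in
lemma amat_mul (g₁ g₂ : G) (i j : Fin N) :
    amat ρ (g₁ * g₂) i j = ∑ l, amat ρ g₁ i l * amat ρ g₂ l j := by
  have : amat ρ (g₁ * g₂) i j = coeff (single i 1) (ρ g₁ (ρ g₂ (X j))) := by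
    rw [amat, map_mul, AlgEquiv.mul_apply]
  rw [this, lin_coeff ρ hloc g₁ _ (hloc g₂ _ (X_mem_mm j)) i]
  rfl

lemma amat_one (i j : Fin N) : amat ρ 1 i j = if i = j then 1 else 0 := by
  rw [amat, map_one]
  show coeff (single i 1) (X j) = _
  exact coeff_single_X i j

end Group


end LinearizationAux

open LinearizationAux

/-- **Formal linearization of finite group actions (Lemma on linearization).**
Let `R = k[[x₁,…,x_N]]` and let a finite group `G` act on `R` by `k`-algebra automorphisms
preserving the maximal ideal `m = (x₁,…,x_N)`, with `char k` not dividing `|G|`.  Then there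
are new local parameters `y₁,…,y_N ∈ m` (i.e. elements of `m` such that the substitution
`xᵢ ↦ yᵢ` is realized by a `k`-algebra automorphism of `R`) in which `G` acts by linear
substitutions: every `g · yᵢ` is a `k`-linear combination of `y₁,…,y_N`. -/
theorem finite_group_action_on_power_series_linearizable
    (k : Type*) [Field k] (N : ℕ) (hN : 0 < N)
    (G : Type*) [Group G] [Finite G]
    (ρ : G →* (MvPowerSeries (Fin N) k ≃ₐ[k] MvPowerSeries (Fin N) k))
    (hchar : ¬ ringChar k ∣ Nat.card G)
    (hloc : ∀ g : G, ∀ f ∈ Ideal.span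
        (Set.range (MvPowerSeries.X : Fin N → MvPowerSeries (Fin N) k)),
      ρ g f ∈ Ideal.span
        (Set.range (MvPowerSeries.X : Fin N → MvPowerSeries (Fin N) k))) :
    ∃ y : Fin N → MvPowerSeries (Fin N) k,
      (∀ i, y i ∈ Ideal.span
        (Set.range (MvPowerSeries.X : Fin N → MvPowerSeries (Fin N) k))) ∧
      (∃ φ : MvPowerSeries (Fin N) k ≃ₐ[k] MvPowerSeries (Fin N) k,
        ∀ i, φ (MvPowerSeries.X i) = y i) ∧
      ∀ (g : G) (i : Fin N), ∃ c : Fin N → k,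
        ρ g (y i) = ∑ j : Fin N, c j • y j := by
  classical
  have _instF : Fintype G := Fintype.ofFinite G
  have hloc' : ∀ g : G, ∀ f ∈ mm k N, ρ g f ∈ mm k N := hloc
  have hcard : (Nat.card G : k) ≠ 0 := by
    intro h0
    exact hchar ((CharP.cast_eq_zero_iff k (ringChar k) _).mp h0)
  -- the averaged coordinates
  set w : Fin N → MvPowerSeries (Fin N) k :=
    fun i => ∑ g : G, ∑ j, amat ρ g⁻¹ j i • ρ g (X j) with hw
  set y : Fin N → MvPowerSeries (Fin N) k :=
    fun i => (Nat.card G : k)⁻¹ • w i with hydef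
  have hρX_mem : ∀ (g : G) (j : Fin N), ρ g (X j) ∈ mm k N :=
    fun g j => hloc' g _ (X_mem_mm j)
  have h_const : ∀ i, constantCoeff (y i) = 0 := by
    intro i
    rw [hydef, ← coeff_zero_eq_constantCoeff_apply, coeff_smul, hw]
    simp only [map_sum, coeff_smul]
    have : ∀ g : G, ∑ j, amat ρ g⁻¹ j i * coeff 0 (ρ g (X j)) = 0 := by
      intro g
      refine Finset.sum_eq_zero fun j _ => ?_
      rw [coeff_zero_eq_constantCoeff_apply, mem_mm_iff.mp (hρX_mem g j), mul_zero]
    rw [Finset.sum_congr rfl fun g _ => this g, Finset.sum_const, smul_zero, mul_zero]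
  have hy : ∀ i, y i ∈ mm k N := fun i => mem_mm_iff.mpr (h_const i)
  -- linear coefficients of y are those of X
  have hcoeff_y : ∀ l i : Fin N,
      coeff (single l 1) (y i) = if l = i then 1 else 0 := by
    intro l i
    rw [hydef, coeff_smul, hw]
    simp only [map_sum, coeff_smul]
    have hterm : ∀ g : G, ∑ j, amat ρ g⁻¹ j i * coeff (single l 1) (ρ g (X j))
        = if l = i then 1 else 0 := by
      intro g
      have : ∀ j, coeff (single l 1) (ρ g (X j)) = amat ρ g l j := fun j => rfl
      rw [Finset.sum_congr rfl fun j _ => by rw [this j, mul_comm]]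
      rw [← amat_mul ρ hloc' g g⁻¹ l i, mul_inv_cancel, amat_one]
    rw [Finset.sum_congr rfl fun g _ => hterm g, Finset.sum_const, Nat.card_eq_fintype_card]
    by_cases h : l = i
    · rw [if_pos h, nsmul_eq_mul, mul_one, Finset.card_univ,
        inv_mul_cancel₀ (by rwa [Nat.card_eq_fintype_card] at hcard)]
    · rw [if_neg h, smul_zero, mul_zero]
  -- y i - X i lies in m²
  have hyX : ∀ i, y i - X i ∈ (mm k N) ^ 2 := by
    intro i
    set z := y i - X i with hz
    have hz0 : constantCoeff z = 0 := by
      rw [hz, map_sub, h_const, constantCoeff_X, sub_zero]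
    have hz1 : ∀ l, coeff (single l 1) z = 0 := by
      intro l
      rw [hz, map_sub, hcoeff_y, coeff_single_X, sub_self]
    rw [← hdec_spec z hz0]
    refine Ideal.sum_mem _ fun l _ => ?_
    rw [pow_two]
    exact Ideal.mul_mem_mul (X_mem_mm l)
      (mem_mm_iff.mpr (by rw [constantCoeff_hdec]; exact hz1 l))
  -- the linearized action
  have hlinw : ∀ (h : G) (i : Fin N), ρ h (w i) = ∑ l, amat ρ h l i • w l := by
    intro h i
    have step1 : ρ h (w i) = ∑ g : G, ∑ j, amat ρ g⁻¹ j i • ρ (h * g) (X j) := by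
      rw [hw, map_sum]
      refine Finset.sum_congr rfl fun g _ => ?_
      rw [map_sum]
      refine Finset.sum_congr rfl fun j _ => ?_
      rw [map_smul, ← AlgEquiv.mul_apply, ← map_mul]
    have step2 : ∑ g : G, ∑ j, amat ρ g⁻¹ j i • ρ (h * g) (X j)
        = ∑ g : G, ∑ j, amat ρ (g⁻¹ * h) j i • ρ g (X j) := by
      refine Fintype.sum_equiv (Equiv.mulLeft h) _ _ fun g => ?_
      simp only [Equiv.coe_mulLeft]
      refine Finset.sum_congr rfl fun j _ => ?_
      rw [mul_inv_rev, inv_mul_cancel_right]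
    have step3 : ∑ g : G, ∑ j, amat ρ (g⁻¹ * h) j i • ρ g (X j)
        = ∑ g : G, ∑ j, ∑ l, amat ρ h l i • (amat ρ g⁻¹ j l • ρ g (X j)) := by
      refine Finset.sum_congr rfl fun g _ => Finset.sum_congr rfl fun j _ => ?_
      rw [amat_mul ρ hloc' g⁻¹ h j i, Finset.sum_smul]
      refine Finset.sum_congr rfl fun l _ => ?_
      rw [mul_comm, mul_smul]
    have hwl : ∀ l, amat ρ h l i • w l
        = ∑ g : G, ∑ j, amat ρ h l i • (amat ρ g⁻¹ j l • ρ g (X j)) := by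
      intro l
      rw [hw, Finset.smul_sum]
      exact Finset.sum_congr rfl fun g _ => Finset.smul_sum
    have inner : ∀ g : G,
        (∑ j, ∑ l, amat ρ h l i • (amat ρ g⁻¹ j l • ρ g (X j)))
        = ∑ l, ∑ j, amat ρ h l i • (amat ρ g⁻¹ j l • ρ g (X j)) :=
      fun g => Finset.sum_comm
    rw [step1, step2, step3, Finset.sum_congr rfl fun g _ => inner g, Finset.sum_comm]
    exact Finset.sum_congr rfl fun l _ => (hwl l).symm
  refine ⟨y, fun i => hy i, ?_, ?_⟩
  · have hbij : Function.Bijective (SAlg y hy) := by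
      constructor
      · intro f g hfg
        have h0 : Sfun y (f - g) = 0 := by
          rw [← SAlg_apply y hy, map_sub, hfg, sub_self]
        exact sub_eq_zero.mp (Sfun_injective0 y hy hyX (f - g) h0)
      · intro t
        obtain ⟨f, hf⟩ := Sfun_surjective y hy hyX t
        exact ⟨f, by rw [SAlg_apply]; exact hf⟩
    refine ⟨AlgEquiv.ofBijective (SAlg y hy) hbij, fun i => ?_⟩
    show (SAlg y hy) (X i) = y i
    rw [SAlg_apply]
    exact Sfun_X y h_const i
  · intro g i
    refine ⟨fun l => amat ρ g l i, ?_⟩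
    have h1 : ρ g (y i) = (Nat.card G : k)⁻¹ • ρ g (w i) := by
      rw [hydef]
      exact map_smul (ρ g) _ _
    rw [h1, hlinw g i, Finset.smul_sum]
    refine Finset.sum_congr rfl fun l _ => ?_
    rw [hydef]
    exact smul_comm _ _ _
end

section
/- Let m, n, r be positive integers with r^n ≡ 1 (mod m) and gcd(n(r−1), m) = 1, let d be the multiplicative order of r modulo m, assume d divides n, set n' = n/d, and assume every prime divisor of d divides n'. Let k, l be integers with gcd(k, m) = 1 and gcd(l, n) = 1. Define matrices A₀, B₀ of size d×d over ℂ by A₀ = diag(e^{2πik/m}, e^{2πikr/m}, …, e^{2πikr^{d−1}/m}) and B₀ having (j, j+1)-entry equal to 1 for 1 ≤ j ≤ d−1, (d, 1)-entry equal to e^{2πil/n'}, and all other entries 0. Then det A₀ = 1 and det B₀ = (−1)^{d−1}·e^{2πil/n'}; consequently, the subgroup of GL(d, ℂ) generated by A₀ and B₀ is contained in SL(d, ℂ) if and only if either m = n = d = 1, or d = 2^s and n = 2^{s+1} for some s ≥ 1. -/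
open Matrix Complex

/-- The matrix `π_{k,l}(A) = diag(e^{2πik/m}, e^{2πikr/m}, …, e^{2πikr^{d−1}/m})` of the
generator `A` in the irreducible representation `π_{k,l}` of a group of Wolf's type I. -/
noncomputable def typeIMatA (m d r : ℕ) (k : ℤ) : Matrix (Fin d) (Fin d) ℂ :=
  Matrix.diagonal fun j =>
    Complex.exp (2 * Real.pi * Complex.I * (k : ℂ) * (r : ℂ) ^ (j : ℕ) / (m : ℂ))

/-- The matrix `π_{k,l}(B)` of the generator `B`: `(j, j+1)`-entries equal to `1` for
`1 ≤ j ≤ d−1`, `(d,1)`-entry equal to `e^{2πil/n'}` (with `n' = n/d`), all other entries `0`. -/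
noncomputable def typeIMatB (n d : ℕ) (l : ℤ) : Matrix (Fin d) (Fin d) ℂ :=
  Matrix.of fun i j =>
    if (j : ℕ) = (i : ℕ) + 1 then 1
    else if (i : ℕ) = d - 1 ∧ (j : ℕ) = 0 then
      Complex.exp (2 * Real.pi * Complex.I * (l : ℂ) / ((n / d : ℕ) : ℂ))
    else 0

lemma typeIMatA_det (m d r : ℕ) (k : ℤ) (hm : 0 < m)
    (hdvd : m ∣ ∑ j ∈ Finset.range d, r ^ j) :
    (typeIMatA m d r k).det = 1 := by
  obtain ⟨t, ht⟩ := hdvd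
  rw [typeIMatA, Matrix.det_diagonal, ← Complex.exp_sum]
  have hS : (∑ j ∈ Finset.range d, ((r : ℂ)) ^ j) = (m : ℂ) * (t : ℂ) := by
    have := congrArg (fun x : ℕ => (x : ℂ)) ht
    push_cast at this
    simpa using this
  have h1 : ∑ j : Fin d, (2 * (Real.pi : ℂ) * Complex.I * (k : ℂ) * (r : ℂ) ^ (j : ℕ) / m)
      = ((k * t : ℤ) : ℂ) * (2 * Real.pi * Complex.I) := by
    rw [Fin.sum_univ_eq_sum_range
      (fun j => 2 * (Real.pi : ℂ) * Complex.I * (k : ℂ) * (r : ℂ) ^ j / m) d]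
    have hm0 : (m : ℂ) ≠ 0 := Nat.cast_ne_zero.mpr hm.ne'
    rw [← Finset.sum_div, ← Finset.mul_sum, hS]
    push_cast
    field_simp
  rw [h1, Complex.exp_int_mul_two_pi_mul_I]

lemma typeIMatB_det (n e : ℕ) (l : ℤ) :
    (typeIMatB n (e + 1) l).det =
      (-1 : ℂ) ^ e *
        Complex.exp (2 * Real.pi * Complex.I * (l : ℂ) / ((n / (e + 1) : ℕ) : ℂ)) := by
  set c : ℂ := Complex.exp (2 * Real.pi * Complex.I * (l : ℂ) / ((n / (e + 1) : ℕ) : ℂ)) with hc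
  have hB : typeIMatB n (e + 1) l =
      Matrix.diagonal (fun i : Fin (e + 1) => if i = Fin.last e then c else 1) *
        Equiv.Perm.permMatrix ℂ (finRotate (e + 1)) := by
    ext i j
    rw [Matrix.diagonal_mul]
    simp only [typeIMatB, Matrix.of_apply, Equiv.Perm.permMatrix, PEquiv.toMatrix_apply,
      Equiv.toPEquiv_apply, finRotate_succ_apply, Option.mem_def, Option.some.injEq,
      Nat.add_sub_cancel]
    by_cases hi : i = Fin.last e
    · subst hi
      have h0 : Fin.last e + 1 = 0 := by
        rw [Fin.last_add_one]
      rw [h0]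
      have hj1 : ¬ ((j : ℕ) = (Fin.last e : ℕ) + 1) := by
        simp only [Fin.val_last]
        omega
      rw [if_neg hj1]
      simp only [Fin.val_last, true_and]
      by_cases hj0 : j = 0
      · subst hj0
        simp [hc]
      · rw [if_neg (fun h => hj0 (Fin.ext (by simpa using h)))]
        have : ¬ ((0 : Fin (e+1)) = j) := fun h => hj0 h.symm
        simp [this]
    · have hilt : (i : ℕ) < e := by
        have := i.isLt
        have : (i : ℕ) ≠ e := fun h => hi (Fin.ext (by simpa using h))
        omega
      have hval : ((i + 1 : Fin (e + 1)) : ℕ) = (i : ℕ) + 1 := by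
        rw [Fin.val_add_one_of_lt]
        exact Fin.lt_last_iff_ne_last.mpr hi
      rw [if_neg hi, one_mul, if_neg (by omega : ¬ ((i : ℕ) = e ∧ (j : ℕ) = 0))]
      by_cases hij : i + 1 = j
      · rw [if_pos hij, if_pos (by rw [← hij, hval])]
      · rw [if_neg hij, if_neg (fun h => hij (Fin.ext (by rw [hval, ← h])))]
  rw [hB, Matrix.det_mul, Matrix.det_diagonal, Matrix.det_permutation, sign_finRotate]
  have hprod : (∏ i : Fin (e + 1), if i = Fin.last e then c else 1) = c := by simp
  rw [hprod]
  simp only [Units.val_pow_eq_pow_val, Units.val_neg, Units.val_one, Int.cast_pow,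
    Int.cast_neg, Int.cast_one]
  ring_nf
  simp


/-- **Determinants of the type I representations (row I of the determinant table).**
With `d` the multiplicative order of `r` mod `m`, `n' = n/d`, every prime divisor of `d`
dividing `n'`, `gcd(k,m) = gcd(l,n) = 1`: `det A₀ = 1`,
`det B₀ = (−1)^{d−1} e^{2πil/n'}`, and the subgroup of `GL(d, ℂ)` generated by `A₀` and `B₀`
is contained in `SL(d, ℂ)` iff `m = n = d = 1` or `d = 2^s`, `n = 2^{s+1}` for some `s ≥ 1`. -/
theorem typeI_representation_determinants
    (m n r d : ℕ) (hm : 0 < m) (hn : 0 < n) (hr : 0 < r)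
    (hrn : r ^ n ≡ 1 [MOD m]) (hcop : Nat.gcd (n * (r - 1)) m = 1)
    (hd : orderOf (r : ZMod m) = d) (hdn : d ∣ n)
    (hpq : ∀ p : ℕ, p.Prime → p ∣ d → p ∣ n / d)
    (k l : ℤ) (hk : Int.gcd k (m : ℤ) = 1) (hl : Int.gcd l (n : ℤ) = 1) :
    (typeIMatA m d r k).det = 1 ∧
    (typeIMatB n d l).det =
      (-1 : ℂ) ^ (d - 1) * Complex.exp (2 * Real.pi * Complex.I * (l : ℂ) / ((n / d : ℕ) : ℂ)) ∧
    ((∀ M : Matrix.GeneralLinearGroup (Fin d) ℂ,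
        M ∈ Subgroup.closure {g : Matrix.GeneralLinearGroup (Fin d) ℂ |
          (g : Matrix (Fin d) (Fin d) ℂ) = typeIMatA m d r k ∨
          (g : Matrix (Fin d) (Fin d) ℂ) = typeIMatB n d l} →
        (M : Matrix (Fin d) (Fin d) ℂ).det = 1) ↔
      (m = 1 ∧ n = 1 ∧ d = 1) ∨ ∃ s : ℕ, 1 ≤ s ∧ d = 2 ^ s ∧ n = 2 ^ (s + 1)) := by
  -- basic positivity
  have hrpow : ((r : ZMod m)) ^ n = 1 := by
    have h0 : ((r ^ n : ℕ) : ZMod m) = ((1 : ℕ) : ZMod m) :=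
      (ZMod.natCast_eq_natCast_iff _ _ _).mpr hrn
    push_cast at h0
    exact h0
  have hfin : IsOfFinOrder ((r : ZMod m)) := isOfFinOrder_iff_pow_eq_one.mpr ⟨n, hn, hrpow⟩
  have hd0 : 0 < d := hd ▸ hfin.orderOf_pos
  obtain ⟨e, he⟩ : ∃ e, d = e + 1 := ⟨d - 1, (Nat.succ_pred_eq_of_pos hd0).symm⟩
  have hn'pos : 0 < n / d := Nat.div_pos (Nat.le_of_dvd hn hdn) hd0
  have hnd : d * (n / d) = n := Nat.mul_div_cancel' hdn
  -- determinant of A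
  have hrd : ((r : ZMod m)) ^ d = 1 := hd ▸ pow_orderOf_eq_one _
  have hcop' : Nat.Coprime (r - 1) m :=
    Nat.Coprime.coprime_dvd_left (dvd_mul_left (r - 1) n) hcop
  have hdvdS : m ∣ ∑ j ∈ Finset.range d, r ^ j := by
    rw [← ZMod.natCast_eq_zero_iff]
    push_cast
    have hmul := geom_sum_mul ((r : ZMod m)) d
    rw [hrd, sub_self] at hmul
    have hu : IsUnit ((r : ZMod m) - 1) := by
      have hcast : ((r : ZMod m)) - 1 = ((r - 1 : ℕ) : ZMod m) := by
        push_cast [Nat.cast_sub hr]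
        ring
      rw [hcast]
      haveI : NeZero m := ⟨hm.ne'⟩
      exact (ZMod.isUnit_iff_coprime _ _).mpr hcop'
    obtain ⟨u, hu⟩ := hu
    have h2 := congrArg (fun z => z * ((u⁻¹ : (ZMod m)ˣ) : ZMod m)) hmul
    simp only [zero_mul] at h2
    rwa [mul_assoc, ← hu, Units.mul_inv, mul_one] at h2
  have hA : (typeIMatA m d r k).det = 1 := typeIMatA_det m d r k hm hdvdS
  -- determinant of B
  have hB : (typeIMatB n d l).det =
      (-1 : ℂ) ^ (d - 1) *
        Complex.exp (2 * Real.pi * Complex.I * (l : ℂ) / ((n / d : ℕ) : ℂ)) := by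
    subst he
    simpa [Nat.add_sub_cancel] using typeIMatB_det n e l
  refine ⟨hA, hB, ?_⟩
  set c : ℂ := Complex.exp (2 * Real.pi * Complex.I * (l : ℂ) / ((n / d : ℕ) : ℂ)) with hcdef
  have hpi : (2 * (Real.pi : ℂ) * Complex.I) ≠ 0 := by
    simp [Real.pi_ne_zero, Complex.I_ne_zero]
  have hn'0 : ((n / d : ℕ) : ℂ) ≠ 0 := Nat.cast_ne_zero.mpr hn'pos.ne'
  constructor
  · -- forward direction
    intro hall
    have hBne : (typeIMatB n d l).det ≠ 0 := by
      rw [hB]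
      exact mul_ne_zero (pow_ne_zero _ (by norm_num)) (Complex.exp_ne_zero _)
    have hB1 : (typeIMatB n d l).det = 1 := by
      have := hall (Matrix.GeneralLinearGroup.mkOfDetNeZero _ hBne)
        (Subgroup.subset_closure (Or.inr rfl))
      simpa using this
    rw [hB] at hB1
    have hc : c = (-1 : ℂ) ^ (d - 1) := by
      have h2 : c = ((-1 : ℂ) ^ (d - 1))⁻¹ := eq_inv_of_mul_eq_one_left (by
        rw [mul_comm]; exact hB1)
      rw [h2, ← inv_pow, inv_neg, inv_one]
    have hcc : c * c = 1 := by
      rw [hc, ← pow_add, ← two_mul, pow_mul]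
      norm_num
    rw [hcdef, ← Complex.exp_add, Complex.exp_eq_one_iff] at hcc
    obtain ⟨t, ht⟩ := hcc
    have key : 2 * (l : ℂ) / ((n / d : ℕ) : ℂ) = (t : ℂ) :=
      mul_left_cancel₀ hpi (by linear_combination ht)
    have key2 : 2 * l = t * (n / d : ℕ) := by
      rw [div_eq_iff hn'0] at key
      have key3 : ((2 * l : ℤ) : ℂ) = ((t * ((n / d : ℕ) : ℤ) : ℤ) : ℂ) := by
        push_cast
        exact key
      exact_mod_cast key3
    have hdvd2 : ((n / d : ℕ) : ℤ) ∣ 2 * l := ⟨t, by linarith [key2]⟩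
    have hcop2 : IsCoprime ((n / d : ℕ) : ℤ) l := by
      have h1 : IsCoprime l (n : ℤ) := Int.isCoprime_iff_gcd_eq_one.mpr hl
      have h2 : ((n / d : ℕ) : ℤ) ∣ (n : ℤ) := Int.natCast_dvd_natCast.mpr (Nat.div_dvd_of_dvd hdn)
      exact (h1.of_isCoprime_of_dvd_right h2).symm
    have hdvd3 : ((n / d : ℕ) : ℤ) ∣ 2 := hcop2.dvd_of_dvd_mul_right hdvd2
    have hdvd4 : (n / d) ∣ 2 := by exact_mod_cast hdvd3
    rcases (Nat.dvd_prime Nat.prime_two).mp hdvd4 with h1 | h2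
    · -- n' = 1
      left
      have hd1 : d = 1 := by
        by_contra hne
        obtain ⟨p, pp, pd⟩ := Nat.exists_prime_and_dvd hne
        have := hpq p pp pd
        rw [h1, Nat.dvd_one] at this
        exact pp.one_lt.ne' this
      have hn1 : n = 1 := by rw [← hnd, h1, hd1]
      have hm1 : m = 1 := by
        have hr1 : (r : ZMod m) = 1 := orderOf_eq_one_iff.mp (by rw [hd, hd1])
        have hmod : r ≡ 1 [MOD m] := by
          have : ((r : ℕ) : ZMod m) = ((1 : ℕ) : ZMod m) := by push_cast; exact hr1
          exact (ZMod.natCast_eq_natCast_iff _ _ _).mp this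
        have hmr : m ∣ r - 1 := (Nat.modEq_iff_dvd' hr).mp hmod.symm
        have : m ∣ 1 := by
          rw [← hcop]
          exact Nat.dvd_gcd (Dvd.dvd.mul_left hmr n) dvd_rfl
        exact Nat.dvd_one.mp this
      exact ⟨hm1, hn1, hd1⟩
    · -- n' = 2
      right
      have h2n : 2 ∣ n := by rw [← h2]; exact Nat.div_dvd_of_dvd hdn
      have hlodd : Odd l := by
        rw [← Int.not_even_iff_odd]
        intro hev
        have h2l : (2 : ℤ) ∣ l := hev.two_dvd
        have : (2 : ℤ) ∣ Int.gcd l (n : ℤ) :=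
          Int.natCast_dvd_natCast.mpr (Nat.dvd_gcd (by exact_mod_cast
            (Int.natAbs_dvd_natAbs.mpr h2l : (2:ℤ).natAbs ∣ l.natAbs)) h2n)
        rw [hl] at this
        norm_num at this
      have hcneg : c = -1 := by
        rw [hcdef, h2]
        have : 2 * (Real.pi : ℂ) * Complex.I * (l : ℂ) / ((2 : ℕ) : ℂ) =
            (l : ℂ) * ((Real.pi : ℂ) * Complex.I) := by
          push_cast
          ring
        rw [this, Complex.exp_int_mul, Complex.exp_pi_mul_I]
        exact Odd.neg_one_zpow hlodd
      have heodd : Odd (d - 1) := by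
        by_contra hev
        rw [Nat.not_odd_iff_even] at hev
        have : (-1 : ℂ) ^ (d - 1) = 1 := hev.neg_one_pow
        rw [hcneg, this] at hc
        norm_num at hc
      have hdne1 : d ≠ 1 := by
        intro h
        rw [h] at heodd
        simp at heodd
      have hall2 : ∀ {q : ℕ}, q.Prime → q ∣ d → q = 2 := by
        intro q hq hqd
        have := hpq q hq hqd
        rw [h2] at this
        exact (Nat.prime_dvd_prime_iff_eq hq Nat.prime_two).mp this
      have hds := Nat.eq_prime_pow_of_unique_prime_dvd hd0.ne' hall2
      refine ⟨d.primeFactorsList.length, ?_, hds, ?_⟩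
      · by_contra hs
        push_neg at hs
        have h0 : d.primeFactorsList.length = 0 := by omega
        rw [h0, pow_zero] at hds
        exact hdne1 hds
      · conv_lhs => rw [← hnd, h2, hds]
        rw [pow_succ]
  · -- converse direction
    intro hcases M hM
    have hB1 : (typeIMatB n d l).det = 1 := by
      rw [hB, hcdef]
      rcases hcases with ⟨hm1, hn1, hd1⟩ | ⟨s, hs, hds, hns⟩
      · rw [hd1, hn1]
        have h11 : ((1 / 1 : ℕ) : ℂ) = 1 := by norm_num
        have heq : 2 * (Real.pi : ℂ) * Complex.I * (l : ℂ) / ((1 / 1 : ℕ) : ℂ) =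
            (l : ℂ) * (2 * Real.pi * Complex.I) := by
          rw [h11, div_one]; ring
        rw [heq, Complex.exp_int_mul_two_pi_mul_I]
        norm_num
      · have hn'2 : n / d = 2 := by
          rw [hns, hds, Nat.pow_div (by omega) (by norm_num)]
          simp [Nat.add_sub_cancel_left]
        have h2n : 2 ∣ n := by rw [← hn'2]; exact Nat.div_dvd_of_dvd hdn
        have hlodd : Odd l := by
          rw [← Int.not_even_iff_odd]
          intro hev
          have h2l : (2 : ℤ) ∣ l := hev.two_dvd
          have : (2 : ℤ) ∣ Int.gcd l (n : ℤ) :=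
            Int.natCast_dvd_natCast.mpr (Nat.dvd_gcd (by exact_mod_cast
              (Int.natAbs_dvd_natAbs.mpr h2l : (2:ℤ).natAbs ∣ l.natAbs)) h2n)
          rw [hl] at this
          norm_num at this
        have hcneg : Complex.exp (2 * Real.pi * Complex.I * (l : ℂ) / ((n / d : ℕ) : ℂ)) = -1 := by
          rw [hn'2]
          have : 2 * (Real.pi : ℂ) * Complex.I * (l : ℂ) / ((2 : ℕ) : ℂ) =
              (l : ℂ) * ((Real.pi : ℂ) * Complex.I) := by
            push_cast
            ring
          rw [this, Complex.exp_int_mul, Complex.exp_pi_mul_I]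
          exact Odd.neg_one_zpow hlodd
        have hdodd : Odd (d - 1) := by
          rw [hds]
          exact Nat.Even.sub_odd (Nat.one_le_two_pow)
            ((Nat.even_pow' (by omega)).mpr even_two) odd_one
        rw [hcneg, hdodd.neg_one_pow]
        norm_num
    refine Subgroup.closure_induction ?_ ?_ ?_ ?_ hM
    · rintro x (hx | hx)
      · rw [hx]; exact hA
      · rw [hx]; exact hB1
    · simp
    · intro x y _ _ hx hy
      rw [Units.val_mul, Matrix.det_mul, hx, hy, mul_one]
    · intro x _ hx
      have h1 : ((x : Matrix (Fin d) (Fin d) ℂ)).det *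
          ((x⁻¹ : Matrix.GeneralLinearGroup (Fin d) ℂ) : Matrix (Fin d) (Fin d) ℂ).det = 1 := by
        rw [← Matrix.det_mul, ← Units.val_mul, mul_inv_cancel]
        simp
      rwa [hx, one_mul] at h1
end

section
/- Let m, n, r be positive integers with r^n ≡ 1 (mod m) and gcd(n(r−1), m) = 1, let d be the multiplicative order of r modulo m, assume d divides n, set n' = n/d, and assume every prime divisor of d divides n'. Let k, l be integers with gcd(k, m) = 1 and gcd(l, n) = 1. Define matrices A₀, B₀ of size d×d over ℂ by A₀ = diag(e^{2πik/m}, e^{2πikr/m}, …, e^{2πikr^{d−1}/m}) and B₀ having (j, j+1)-entry equal to 1 for 1 ≤ j ≤ d−1, (d, 1)-entry equal to e^{2πil/n'}, and all other entries 0. Then A₀^m = I, B₀^n = I, B₀A₀B₀⁻¹ = A₀^r, the subgroup G of GL(d, ℂ) generated by A₀ and B₀ has order mn, the tautological d-dimensional representation of G (the inclusion G ⊆ GL(d, ℂ)) is irreducible, and no element of G other than the identity has 1 as an eigenvalue. -/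
open Matrix Complex

noncomputable def eC (N : ℕ) (c : ℤ) : ℂ := Complex.exp (2 * Real.pi * Complex.I * (c:ℂ) / (N:ℂ))

lemma eC_ne_zero (N : ℕ) (c : ℤ) : eC N c ≠ 0 := Complex.exp_ne_zero _
lemma eC_add (N : ℕ) (c c' : ℤ) : eC N (c + c') = eC N c * eC N c' := by
  rw [eC, eC, eC, ← Complex.exp_add]; congr 1; push_cast; ring
lemma eC_zero (N : ℕ) : eC N 0 = 1 := by simp [eC]
lemma eC_congr (N : ℕ) {c c' : ℤ} (h : c = c') : eC N c = eC N c' := by rw [h]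
lemma eC_pow (N : ℕ) (c : ℤ) (t : ℕ) : eC N c ^ t = eC N (t * c) := by
  induction t with
  | zero => simp [eC_zero]
  | succ t ih => rw [pow_succ, ih, ← eC_add]; exact eC_congr N (by push_cast; ring)

lemma eC_eq_one_iff {N : ℕ} (hN : 0 < N) (c : ℤ) : eC N c = 1 ↔ (N:ℤ) ∣ c := by
  have hNC : (N:ℂ) ≠ 0 := by exact_mod_cast hN.ne'
  rw [eC, Complex.exp_eq_one_iff]
  constructor
  · rintro ⟨t, ht⟩
    refine ⟨t, ?_⟩
    have h2 : (c : ℂ) = (N:ℂ) * t := by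
      have h3 : (2 * Real.pi * Complex.I) * c = (2 * Real.pi * Complex.I) * (N * t) := by
        field_simp at ht
        linear_combination (2 * ↑Real.pi * Complex.I) * ht
      exact mul_left_cancel₀ Complex.two_pi_I_ne_zero h3
    exact_mod_cast h2
  · rintro ⟨t, rfl⟩
    refine ⟨t, ?_⟩
    push_cast
    field_simp

lemma eC_eq_iff {N : ℕ} (hN : 0 < N) (c c' : ℤ) : eC N c = eC N c' ↔ (N:ℤ) ∣ c - c' := by
  rw [← eC_eq_one_iff hN]
  have h := eC_add N c' (c - c')
  rw [add_sub_cancel] at h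
  constructor
  · intro hcc
    have h5 := h.symm.trans hcc
    nth_rewrite 2 [show eC N c' = eC N c' * 1 by ring] at h5
    exact mul_left_cancel₀ (eC_ne_zero N c') h5
  · intro h1
    rw [h1, mul_one] at h
    exact h

lemma eC_scale {N t : ℕ} (ht : 0 < t) (c : ℤ) : eC N c = eC (N * t) (c * t) := by
  rw [eC, eC]
  congr 1
  have htC : (t:ℂ) ≠ 0 := by exact_mod_cast ht.ne'
  by_cases hN : (N:ℂ) = 0
  · push_cast
    rw [hN]
    simp
  · field_simp
    push_cast
    ring

section Main
variable (m n r d : ℕ) (k l : ℤ)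

lemma matA_eq : typeIMatA m d r k = Matrix.diagonal (fun x : Fin d => eC m (k * (r:ℤ)^(x:ℕ))) := by
  unfold typeIMatA
  refine congrArg Matrix.diagonal (funext fun x => ?_)
  unfold eC
  congr 1
  push_cast
  ring

lemma matB_apply (x y : Fin d) : typeIMatB n d l x y =
    if (y:ℕ) = (x:ℕ)+1 then 1 else if (x:ℕ) = d-1 ∧ (y:ℕ) = 0 then eC (n/d) l else 0 := rfl

lemma matA_pow (a : ℕ) : typeIMatA m d r k ^ a =
    Matrix.diagonal (fun x : Fin d => eC m (a * (k * (r:ℤ)^(x:ℕ)))) := by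
  rw [matA_eq, Matrix.diagonal_pow]
  exact congrArg Matrix.diagonal (funext fun x => by rw [Pi.pow_apply, eC_pow])

lemma matAB (a b : ℕ) (x y : Fin d) :
    (typeIMatA m d r k ^ a * typeIMatB n d l ^ b) x y =
      if (y:ℕ) = ((x:ℕ)+b) % d then
        eC m (a * (k * (r:ℤ)^(x:ℕ))) * eC (n/d) (l * (((((x:ℕ)+b)/d : ℕ)) : ℤ)) else 0 := by
  have hd0 : 0 < d := x.pos
  induction b generalizing y with
  | zero =>
      rw [pow_zero, mul_one, matA_pow, Matrix.diagonal_apply]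
      rw [Nat.add_zero, Nat.mod_eq_of_lt x.isLt, Nat.div_eq_of_lt x.isLt]
      rw [Int.ofNat_zero, mul_zero, eC_zero, mul_one]
      by_cases h : (y:ℕ) = (x:ℕ)
      · rw [if_pos h, if_pos (Fin.ext h.symm)]
      · rw [if_neg h, if_neg (fun he => h (congrArg Fin.val he.symm))]
  | succ b ih =>
      have key : typeIMatA m d r k ^ a * typeIMatB n d l ^ (b+1)
          = (typeIMatA m d r k ^ a * typeIMatB n d l ^ b) * typeIMatB n d l := by
        rw [pow_succ, mul_assoc]
      rw [key, Matrix.mul_apply]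
      set c := ((x:ℕ)+b) % d with hc
      set q := ((x:ℕ)+b) / d with hq
      have hcd : c < d := Nat.mod_lt _ hd0
      have hsplit : d * q + c = (x:ℕ) + b := Nat.div_add_mod _ _
      set t₀ : Fin d := ⟨c, hcd⟩ with ht₀
      rw [Finset.sum_eq_single t₀]
      rotate_left
      · intro t _ hne
        rw [ih t, if_neg, zero_mul]
        intro h
        exact hne (Fin.ext h)
      · intro h
        exact absurd (Finset.mem_univ t₀) h
      rw [ih t₀, if_pos rfl, matB_apply]
      by_cases h1 : c + 1 < d
      · have hmod : ((x:ℕ) + (b+1)) % d = c + 1 := by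
          have he : (x:ℕ) + (b+1) = (c+1) + d * q := by omega
          rw [he, Nat.add_mul_mod_self_left, Nat.mod_eq_of_lt h1]
        have hdiv : ((x:ℕ) + (b+1)) / d = q := by
          have he : (x:ℕ) + (b+1) = (c+1) + d * q := by omega
          rw [he, Nat.add_mul_div_left _ _ hd0, Nat.div_eq_of_lt h1, Nat.zero_add]
        rw [hmod, hdiv]
        have hne : ¬ ((t₀:ℕ) = d - 1 ∧ (y:ℕ) = 0) := by
          rintro ⟨hh, -⟩
          simp only [ht₀] at hh
          omega
        by_cases hy : (y:ℕ) = c + 1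
        · rw [if_pos hy, if_pos hy, mul_one]
        · rw [if_neg hy, if_neg hy, if_neg hne, mul_zero]
      · have h2 : c + 1 = d := by omega
        have hqd : d * (q + 1) = d * q + d := by ring
        have hmod : ((x:ℕ) + (b+1)) % d = 0 := by
          have he : (x:ℕ) + (b+1) = d * (q + 1) := by omega
          rw [he, Nat.mul_mod_right]
        have hdiv : ((x:ℕ) + (b+1)) / d = q + 1 := by
          have he : (x:ℕ) + (b+1) = d * (q + 1) := by omega
          rw [he, Nat.mul_div_cancel_left _ hd0]
        rw [hmod, hdiv]
        have hy1 : ¬ ((y:ℕ) = c + 1) := by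
          have := y.isLt; omega
        rw [if_neg hy1]
        have ht : (t₀:ℕ) = d - 1 := by simp only [ht₀]; omega
        by_cases hy : (y:ℕ) = 0
        · rw [if_pos hy, if_pos ⟨ht, hy⟩]
          rw [mul_assoc, ← eC_add]
          congr 1
          exact eC_congr _ (by push_cast; ring)
        · rw [if_neg hy, if_neg (fun hh => hy hh.2), mul_zero]
end Main

section NT
lemma zmod_pow_one_iff (m r d : ℕ) (hd : orderOf (r : ZMod m) = d) (t : ℕ) :
    ((m:ℤ) ∣ (r:ℤ)^t - 1) ↔ d ∣ t := by
  rw [← hd, orderOf_dvd_iff_pow_eq_one]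
  have h2 : (r:ZMod m)^t = ((r^t : ℕ) : ZMod m) := by push_cast; ring
  rw [h2, show (1 : ZMod m) = ((1:ℕ) : ZMod m) by push_cast; ring,
    ZMod.natCast_eq_natCast_iff, Nat.modEq_iff_dvd]
  push_cast
  constructor
  · intro h
    have := dvd_neg.mpr h
    rwa [neg_sub] at this
  · intro h
    have := dvd_neg.mpr h
    rwa [neg_sub] at this

lemma helper_nm {m n' : ℕ} (hm : 0 < m) (hn' : 0 < n') (hmn' : IsCoprime (m:ℤ) (n':ℤ))
    (C1 C2 : ℤ) (h : eC m C1 * eC n' C2 = 1) : (m:ℤ) ∣ C1 ∧ (n':ℤ) ∣ C2 := by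
  rw [eC_scale hn' C1, eC_scale hm C2, show n' * m = m * n' by ring, ← eC_add] at h
  have hD : (0:ℕ) < m * n' := Nat.mul_pos hm hn'
  have hdvd : ((m*n' : ℕ):ℤ) ∣ C1 * n' + C2 * m := (eC_eq_one_iff hD _).1 h
  push_cast at hdvd
  constructor
  · have h1 : (m:ℤ) ∣ C1 * n' + C2 * m := dvd_trans ⟨n', by push_cast; ring⟩ hdvd
    have h2 : (m:ℤ) ∣ C1 * n' := (dvd_add_right (Dvd.intro_left C2 rfl)).mp (by rwa [add_comm] at h1)
    exact hmn'.dvd_of_dvd_mul_right h2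
  · have h1 : ((n':ℕ):ℤ) ∣ C1 * n' + C2 * m := dvd_trans ⟨m, by push_cast; ring⟩ hdvd
    have h2 : ((n':ℕ):ℤ) ∣ C2 * m := (dvd_add_right (Dvd.intro_left C1 rfl)).mp h1
    exact (hmn'.symm.dvd_of_dvd_mul_right h2)
end NT

lemma matA_pow_m (m n r d : ℕ) (k : ℤ) (hm : 0 < m) : typeIMatA m d r k ^ m = 1 := by
  rw [matA_pow]
  have h : ∀ x : Fin d, eC m (m * (k * (r:ℤ)^(x:ℕ))) = 1 :=
    fun x => (eC_eq_one_iff hm _).2 ⟨k * (r:ℤ)^(x:ℕ), rfl⟩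
  rw [funext h, Matrix.diagonal_one]

lemma matB_pow_n (n d : ℕ) (l : ℤ) (hn : 0 < n) (hdn : d ∣ n) (hd0 : 0 < d) :
    typeIMatB n d l ^ n = 1 := by
  have hnd0 : 0 < n / d := Nat.div_pos (Nat.le_of_dvd hn hdn) hd0
  have h0 : typeIMatA 1 d 1 0 ^ 0 * typeIMatB n d l ^ n = typeIMatB n d l ^ n := by
    rw [pow_zero, one_mul]
  ext x y
  rw [← h0, matAB]
  have hmod : ((x:ℕ) + n) % d = (x:ℕ) := by
    conv_lhs => rw [← Nat.div_mul_cancel hdn]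
    rw [show (x:ℕ) + n/d*d = (x:ℕ) + d * (n/d) by ring, Nat.add_mul_mod_self_left,
      Nat.mod_eq_of_lt x.isLt]
  have hdiv : ((x:ℕ) + n) / d = n / d := by
    conv_lhs => rw [← Nat.div_mul_cancel hdn]
    rw [show (x:ℕ) + n/d*d = (x:ℕ) + d * (n/d) by ring, Nat.add_mul_div_left _ _ hd0,
      Nat.div_eq_of_lt x.isLt, Nat.zero_add]
  rw [hmod, hdiv, Matrix.one_apply]
  rw [Nat.cast_zero, zero_mul, eC_zero, one_mul]
  rw [(eC_eq_one_iff hnd0 (l * ((n/d : ℕ) : ℤ))).2 ⟨l, by ring⟩]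
  by_cases h : (y:ℕ) = (x:ℕ)
  · rw [if_pos h, if_pos (show x = y from Fin.ext h.symm)]
  · rw [if_neg h, if_neg (fun he => h (congrArg Fin.val he).symm)]

lemma matBA (m n r d : ℕ) (k l : ℤ) (hm : 0 < m) (hd0 : 0 < d)
    (hdord : orderOf (r : ZMod m) = d) :
    typeIMatB n d l * typeIMatA m d r k = typeIMatA m d r k ^ r * typeIMatB n d l := by
  rw [matA_pow]
  nth_rewrite 1 [matA_eq]
  ext x y
  rw [Matrix.mul_diagonal, Matrix.diagonal_mul, matB_apply]
  by_cases h1 : (y:ℕ) = (x:ℕ) + 1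
  · rw [if_pos h1, one_mul, mul_one]
    refine eC_congr _ ?_
    rw [h1, pow_succ]
    push_cast
    ring
  · rw [if_neg h1]
    by_cases h2 : (x:ℕ) = d - 1 ∧ (y:ℕ) = 0
    · rw [if_pos h2]
      rw [mul_comm]
      congr 1
      rw [(eC_eq_iff hm _ _)]
      have hxd : (x:ℕ) + 1 = d := by
        have := x.isLt; omega
      obtain ⟨t, ht⟩ := (zmod_pow_one_iff m r d hdord d).2 dvd_rfl
      refine ⟨-(k * t), ?_⟩
      have he : k * (r:ℤ)^(y:ℕ) - (r:ℤ) * (k * (r:ℤ)^(x:ℕ)) = -(k * ((r:ℤ)^d - 1)) := by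
        have hrd : (r:ℤ)^d = (r:ℤ)^((x:ℕ)+1) := by rw [hxd]
        rw [h2.2, hrd, pow_succ, pow_zero]
        ring
      rw [he, ht]
      ring
    · rw [if_neg h2, zero_mul, mul_zero]

lemma matB_inv (n d : ℕ) (l : ℤ) (hn : 0 < n) (hdn : d ∣ n) (hd0 : 0 < d) :
    typeIMatB n d l * (typeIMatB n d l)⁻¹ = 1 ∧
      (typeIMatB n d l)⁻¹ = typeIMatB n d l ^ (n-1) := by
  have h1 : typeIMatB n d l * typeIMatB n d l ^ (n-1) = 1 := by
    rw [← pow_succ']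
    rw [show n - 1 + 1 = n by omega]
    exact matB_pow_n n d l hn hdn hd0
  have h2 : (typeIMatB n d l)⁻¹ = typeIMatB n d l ^ (n-1) := Matrix.inv_eq_right_inv h1
  exact ⟨by rw [h2]; exact h1, h2⟩

lemma matBAB (m n r d : ℕ) (k l : ℤ) (hm : 0 < m) (hn : 0 < n) (hdn : d ∣ n) (hd0 : 0 < d)
    (hdord : orderOf (r : ZMod m) = d) :
    typeIMatB n d l * typeIMatA m d r k * (typeIMatB n d l)⁻¹ = typeIMatA m d r k ^ r := by
  rw [matBA m n r d k l hm hd0 hdord, mul_assoc, (matB_inv n d l hn hdn hd0).1, mul_one]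

lemma d_eq_one_imp_m_eq_one (m r d : ℕ) (hdord : orderOf (r : ZMod m) = d)
    (crm1 : IsCoprime ((m:ℤ)) ((r:ℤ)-1)) (hd1 : d = 1) : m = 1 := by
  have h1 : (m:ℤ) ∣ (r:ℤ) - 1 := by
    have := (zmod_pow_one_iff m r d hdord 1).2 (hd1 ▸ dvd_rfl)
    rwa [pow_one] at this
  obtain ⟨u, v, huv⟩ := crm1
  have h2 : (m:ℤ) ∣ 1 := by
    rw [← huv]
    exact dvd_add (Dvd.intro u (by ring)) (h1.mul_left v)
  have h3 : m ∣ 1 := by exact_mod_cast h2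
  exact Nat.dvd_one.mp h3

lemma mat_entry_eq (m n r d : ℕ) (k l : ℤ) (hd0 : 0 < d) {a b : ℕ} (x : Fin d) :
    (typeIMatA m d r k ^ a * typeIMatB n d l ^ b) x ⟨((x:ℕ) + b % d) % d, Nat.mod_lt _ hd0⟩ =
      eC m (a * (k * (r:ℤ)^(x:ℕ))) * eC (n/d) (l * ((b/d : ℕ) + (((x:ℕ) + b % d)/d : ℕ))) := by
  have h1 : ((x:ℕ) + b) % d = ((x:ℕ) + b % d) % d := by
    conv_lhs => rw [← Nat.div_add_mod b d]
    rw [show (x:ℕ) + (d * (b/d) + b % d) = ((x:ℕ) + b % d) + d * (b/d) by ring,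
      Nat.add_mul_mod_self_left]
  have h2 : ((x:ℕ) + b) / d = b / d + ((x:ℕ) + b % d) / d := by
    conv_lhs => rw [← Nat.div_add_mod b d]
    rw [show (x:ℕ) + (d * (b/d) + b % d) = ((x:ℕ) + b % d) + d * (b/d) by ring,
      Nat.add_mul_div_left _ _ hd0]
    ring
  rw [matAB]
  simp only [Fin.val_mk]
  rw [if_pos h1.symm, h2]
  push_cast
  ring_nf

lemma mat_inj (m n r d : ℕ) (k l : ℤ)
    (hm : 0 < m) (hn : 0 < n)
    (hdord : orderOf (r : ZMod m) = d) (hdn : d ∣ n) (hd0 : 0 < d)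
    (ck : IsCoprime (m:ℤ) k) (crm1 : IsCoprime ((m:ℤ)) ((r:ℤ)-1))
    (cmn' : IsCoprime (m:ℤ) ((n/d : ℕ):ℤ)) (cn'l : IsCoprime ((n/d:ℕ):ℤ) l)
    {a a' b b' : ℕ} (ha : a < m) (ha' : a' < m) (hb : b < n) (hb' : b' < n)
    (heq : typeIMatA m d r k ^ a * typeIMatB n d l ^ b
         = typeIMatA m d r k ^ a' * typeIMatB n d l ^ b') : a = a' ∧ b = b' := by
  set n' := n / d with hn'
  have hn'0 : 0 < n' := Nat.div_pos (Nat.le_of_dvd hn hdn) hd0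
  have hD : 0 < m * n' := Nat.mul_pos hm hn'0
  have hq : b / d < n' := Nat.div_lt_div_of_lt_of_dvd hdn hb
  have hq' : b' / d < n' := Nat.div_lt_div_of_lt_of_dvd hdn hb'
  -- first: b % d = b' % d
  have hs : b % d = b' % d := by
    by_contra hne
    have h1 := congrFun (congrFun heq ⟨0, hd0⟩) ⟨(0 + b % d) % d, Nat.mod_lt _ hd0⟩
    rw [mat_entry_eq m n r d k l hd0, matAB] at h1
    rw [if_neg] at h1
    · exact mul_ne_zero (eC_ne_zero _ _) (eC_ne_zero _ _) h1
    · simp only [Fin.val_mk]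
      intro hc
      apply hne
      have e1 : (0 + b % d) % d = b % d := by
        rw [Nat.zero_add, Nat.mod_mod_of_dvd b dvd_rfl]
      have e2 : (0 + b') % d = b' % d := by rw [Nat.zero_add]
      rw [e1, e2] at hc
      exact hc
  -- the master equation at each x
  have master : ∀ x : Fin d,
      ((m * n' : ℕ):ℤ) ∣ ((a:ℤ) - a') * (k * (r:ℤ)^(x:ℕ)) * n'
        + l * ((b/d : ℕ) - ((b'/d : ℕ):ℤ)) * m := by
    intro x
    have h1 := congrFun (congrFun heq x) ⟨((x:ℕ) + b % d) % d, Nat.mod_lt _ hd0⟩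
    have hidx : (⟨((x:ℕ) + b % d) % d, Nat.mod_lt _ hd0⟩ : Fin d)
        = ⟨((x:ℕ) + b' % d) % d, Nat.mod_lt _ hd0⟩ := Fin.ext (by simp only [Fin.val_mk, hs])
    rw [mat_entry_eq m n r d k l hd0] at h1
    rw [hidx, mat_entry_eq m n r d k l hd0] at h1
    have hw : ((x:ℕ) + b % d) / d = ((x:ℕ) + b' % d) / d := by rw [hs]
    rw [eC_scale hn'0 ((a:ℤ) * (k * (r:ℤ)^(x:ℕ))), eC_scale hm (l * _),
      show n' * m = m * n' by ring, ← eC_add] at h1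
    rw [eC_scale hn'0 ((a':ℤ) * (k * (r:ℤ)^(x:ℕ))), eC_scale hm (l * _),
      show n' * m = m * n' by ring, ← eC_add] at h1
    have h2 := (eC_eq_iff hD _ _).1 h1
    convert h2 using 1
    rw [hw]
    push_cast
    ring
  -- a = a'
  have haa : a = a' := by
    rcases Nat.lt_or_ge d 2 with hd1 | hd2
    · have hm1 : m = 1 := d_eq_one_imp_m_eq_one m r d hdord crm1 (by omega)
      omega
    · have h0 := master ⟨0, hd0⟩
      have h1 := master ⟨1, hd2⟩
      have hsub : ((m * n' : ℕ):ℤ) ∣ ((a:ℤ) - a') * k * ((r:ℤ) - 1) * n' := by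
        have hd2' := dvd_sub h1 h0
        simp only [Fin.val_mk, pow_one, pow_zero] at hd2'
        have e : ((a:ℤ) - a') * k * ((r:ℤ) - 1) * n' = ((a:ℤ) - a') * (k * (r:ℤ)) * n'
            + l * ((b/d : ℕ) - ((b'/d : ℕ):ℤ)) * m
            - (((a:ℤ) - a') * (k * 1) * n' + l * ((b/d : ℕ) - ((b'/d : ℕ):ℤ)) * m) := by ring
        rw [e]
        exact hd2'
      have hm2 : (m:ℤ) ∣ ((a:ℤ) - a') * k * ((r:ℤ) - 1) * n' :=
        dvd_trans ⟨n', by push_cast; ring⟩ hsub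
      have c1 : (m:ℤ) ∣ ((a:ℤ) - a') * k * ((r:ℤ) - 1) := cmn'.dvd_of_dvd_mul_right hm2
      have c2 : (m:ℤ) ∣ ((a:ℤ) - a') * k := crm1.dvd_of_dvd_mul_right c1
      have c3 : (m:ℤ) ∣ ((a:ℤ) - a') := ck.dvd_of_dvd_mul_right c2
      have hz : (a:ℤ) - a' = 0 := Int.eq_zero_of_abs_lt_dvd c3 (by
        rw [abs_lt]
        constructor
        · have := Int.ofNat_lt.2 ha'
          omega
        · have := Int.ofNat_lt.2 ha
          omega)
      omega
  -- b = b'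
  refine ⟨haa, ?_⟩
  subst haa
  have h0 := master ⟨0, hd0⟩
  rw [show ((a:ℤ) - a) = 0 by ring, zero_mul, zero_mul, zero_add] at h0
  have hn2 : ((n':ℕ):ℤ) ∣ l * ((b/d : ℕ) - ((b'/d : ℕ):ℤ)) := by
    have hmm : ((n':ℕ):ℤ) * m ∣ (l * ((b/d : ℕ) - ((b'/d : ℕ):ℤ))) * m := by
      convert h0 using 2
      push_cast
      ring
    exact (mul_dvd_mul_iff_right (by exact_mod_cast hm.ne' : (m:ℤ) ≠ 0)).1 hmm
  have c3 : ((n':ℕ):ℤ) ∣ ((b/d : ℕ):ℤ) - ((b'/d : ℕ):ℤ) := cn'l.dvd_of_dvd_mul_left hn2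
  have hz : ((b/d : ℕ):ℤ) - ((b'/d : ℕ):ℤ) = 0 := Int.eq_zero_of_abs_lt_dvd c3 (by
    have hb1 : ((b/d : ℕ):ℤ) < ((n':ℕ):ℤ) := by exact_mod_cast hq
    have hb2 : ((b'/d : ℕ):ℤ) < ((n':ℕ):ℤ) := by exact_mod_cast hq'
    have hb3 : (0:ℤ) ≤ ((b/d : ℕ):ℤ) := Int.natCast_nonneg _
    have hb4 : (0:ℤ) ≤ ((b'/d : ℕ):ℤ) := Int.natCast_nonneg _
    rw [abs_lt]
    constructor <;> linarith)
  have hbd : b / d = b' / d := by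
    have hzz : ((b/d : ℕ):ℤ) = ((b'/d : ℕ):ℤ) := by linarith
    exact_mod_cast hzz
  have e3 : d * (b / d) + b % d = b := Nat.div_add_mod b d
  have e4 : d * (b' / d) + b' % d = b' := Nat.div_add_mod b' d
  rw [hbd, hs] at e3
  exact e3.symm.trans e4

lemma mulVec_fixed_step (m n r d : ℕ) (k l : ℤ) (hd0 : 0 < d) {a b : ℕ} (v : Fin d → ℂ)
    (hv : (typeIMatA m d r k ^ a * typeIMatB n d l ^ b).mulVec v = v) (y : Fin d) :
    v y = (eC m (a * (k * (r:ℤ)^(y:ℕ))) * eC (n/d) (l * ((((y:ℕ)+b)/d : ℕ) : ℤ)))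
      * v ⟨((y:ℕ)+b)%d, Nat.mod_lt _ hd0⟩ := by
  have h := congrFun hv y
  rw [Matrix.mulVec, dotProduct] at h
  rw [← h]
  rw [Finset.sum_eq_single (⟨((y:ℕ)+b)%d, Nat.mod_lt _ hd0⟩ : Fin d)]
  · rw [matAB]
    simp only [Fin.val_mk, if_true, eq_self_iff_true]
  · intro t _ hne
    rw [matAB, if_neg, zero_mul]
    intro hc
    exact hne (Fin.ext hc)
  · intro hmem
    exact absurd (Finset.mem_univ _) hmem

lemma mat_fpf (m n r d : ℕ) (k l : ℤ)
    (hm : 0 < m) (hn : 0 < n)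
    (hdord : orderOf (r : ZMod m) = d) (hdn : d ∣ n) (hd0 : 0 < d)
    (hpq : ∀ p : ℕ, p.Prime → p ∣ d → p ∣ n / d)
    (cmn' : IsCoprime (m:ℤ) ((n/d : ℕ):ℤ)) (cn'l : IsCoprime ((n/d:ℕ):ℤ) l)
    (ck : IsCoprime (m:ℤ) k) (cr : IsCoprime (m:ℤ) (r:ℤ))
    {a b : ℕ} (ha : a < m) (hb : b < n) (hab : ¬(a = 0 ∧ b = 0)) (v : Fin d → ℂ)
    (hv : (typeIMatA m d r k ^ a * typeIMatB n d l ^ b).mulVec v = v) : v = 0 := by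
  set n' := n / d with hn'def
  have hn'0 : 0 < n' := Nat.div_pos (Nat.le_of_dvd hn hdn) hd0
  obtain ⟨s, q, hbsq, hsd, hq⟩ : ∃ s q, d * q + s = b ∧ s < d ∧ q < n' :=
    ⟨b % d, b / d, Nat.div_add_mod b d, Nat.mod_lt _ hd0, Nat.div_lt_div_of_lt_of_dvd hdn hb⟩
  funext x
  show v x = 0
  rcases Nat.eq_zero_or_pos s with hs0 | hs0
  · -- diagonal case
    have hcoef := mulVec_fixed_step m n r d k l hd0 v hv x
    have hb' : b = d * q := by omega
    have hmod : ((x:ℕ) + b) % d = (x:ℕ) := by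
      rw [hb', Nat.add_mul_mod_self_left, Nat.mod_eq_of_lt x.isLt]
    have hdiv : ((x:ℕ) + b) / d = q := by
      rw [hb', Nat.add_mul_div_left _ _ hd0, Nat.div_eq_of_lt x.isLt, Nat.zero_add]
    rw [show (⟨((x:ℕ) + b) % d, Nat.mod_lt _ hd0⟩ : Fin d) = x from Fin.ext hmod] at hcoef
    rw [hdiv] at hcoef
    by_contra hvx
    have hcoef1 : eC m (a * (k * (r:ℤ)^(x:ℕ))) * eC n' (l * (q:ℤ)) = 1 := by
      have h2 : (eC m (a * (k * (r:ℤ)^(x:ℕ))) * eC n' (l * (q:ℤ))) * v x = 1 * v x := by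
        rw [one_mul, ← hcoef]
      exact mul_right_cancel₀ hvx h2
    obtain ⟨hdm, hdn'⟩ := helper_nm hm hn'0 cmn' _ _ hcoef1
    have c1 : (m:ℤ) ∣ (a:ℤ) * k := (cr.pow_right).dvd_of_dvd_mul_right
      (by rw [show (a:ℤ) * k * (r:ℤ)^(x:ℕ) = (a:ℤ) * (k * (r:ℤ)^(x:ℕ)) by ring]; exact hdm)
    have c2 : (m:ℤ) ∣ (a:ℤ) := ck.dvd_of_dvd_mul_right c1
    have ha0 : a = 0 := Nat.eq_zero_of_dvd_of_lt (by exact_mod_cast c2) ha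
    have c3 : ((n':ℕ):ℤ) ∣ (q:ℤ) := cn'l.dvd_of_dvd_mul_left hdn'
    have hq0 : q = 0 := Nat.eq_zero_of_dvd_of_lt (by exact_mod_cast c3) hq
    have hb0 : b = 0 := by rw [← hbsq, hs0, hq0, Nat.mul_zero]
    exact absurd ⟨ha0, hb0⟩ hab
  · -- shift case
    obtain ⟨e, hegcd⟩ : ∃ e, e = Nat.gcd s d := ⟨_, rfl⟩
    have he0 : 0 < e := hegcd ▸ Nat.gcd_pos_of_pos_left _ hs0
    have hes : e ∣ s := hegcd ▸ Nat.gcd_dvd_left _ _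
    have hed : e ∣ d := hegcd ▸ Nat.gcd_dvd_right _ _
    obtain ⟨f, hfdef⟩ : ∃ f, f = d / e := ⟨_, rfl⟩
    have hfd : f ∣ d := hfdef ▸ Nat.div_dvd_of_dvd hed
    have hef : e * f = d := by rw [hfdef]; exact Nat.mul_div_cancel' hed
    have hf1 : 1 < f := by
      by_contra hcon
      push_neg at hcon
      have h1 : e * f ≤ e * 1 := Nat.mul_le_mul_left e hcon
      have h2 : e ≤ s := Nat.le_of_dvd hs0 hes
      omega
    have hcop : Nat.Coprime (s / e) f := by
      rw [hegcd, hfdef, hegcd]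
      exact Nat.coprime_div_gcd_div_gcd (hegcd ▸ he0)
    have hfs : f * s = d * (s / e) := by
      calc f * s = f * (e * (s / e)) := by rw [Nat.mul_div_cancel' hes]
        _ = (e * f) * (s / e) := by ring
        _ = d * (s / e) := by rw [hef]
    have hstep := mulVec_fixed_step m n r d k l hd0 v hv
    have claim : ∀ T : ℕ,
        v x = eC m (a * (k * (∑ t ∈ Finset.range T, (r:ℤ)^(((x:ℕ)+t*s)%d))))
          * eC n' (l * ((T*q + ((x:ℕ)+T*s)/d : ℕ) : ℤ))
          * v ⟨((x:ℕ)+T*s)%d, Nat.mod_lt _ hd0⟩ := by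
      intro T
      induction T with
      | zero =>
          simp only [Finset.range_zero, Finset.sum_empty, Nat.zero_mul, Nat.add_zero,
            Nat.zero_add]
          rw [show (⟨(x:ℕ) % d, Nat.mod_lt _ hd0⟩ : Fin d) = x from
            Fin.ext (Nat.mod_eq_of_lt x.isLt)]
          rw [Nat.div_eq_of_lt x.isLt]
          simp only [mul_zero, eC_zero, Nat.cast_zero, one_mul, mul_one]
      | succ T ih =>
          have hTs : (T+1)*s = T*s + s := by ring
          simp only [hTs]
          set y : Fin d := ⟨((x:ℕ)+T*s)%d, Nat.mod_lt _ hd0⟩ with hydef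
          have hyv : (y:ℕ) = ((x:ℕ)+T*s)%d := rfl
          have hYQ : d * (((x:ℕ)+T*s)/d) + (y:ℕ) = (x:ℕ) + T*s := by
            rw [hyv]; exact Nat.div_add_mod _ _
          have hmod2 : ((y:ℕ) + b) % d = ((x:ℕ) + (T*s + s)) % d := by
            have hdistr : d * (((x:ℕ)+T*s)/d + q) = d * (((x:ℕ)+T*s)/d) + d * q := by ring
            have h1 : (x:ℕ) + (T*s + s) = ((y:ℕ) + s) + d * (((x:ℕ)+T*s)/d) := by omega
            have h2 : (y:ℕ) + b = ((y:ℕ) + s) + d * q := by omega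
            rw [h1, Nat.add_mul_mod_self_left, h2, Nat.add_mul_mod_self_left]
          have hdiv2 : ((y:ℕ) + b) / d = q + (((y:ℕ) + s) / d) := by
            have h2 : (y:ℕ) + b = ((y:ℕ) + s) + d * q := by omega
            rw [h2, Nat.add_mul_div_left _ _ hd0]
            ring
          have hdiv3 : ((x:ℕ) + (T*s + s)) / d = ((x:ℕ)+T*s)/d + (((y:ℕ) + s) / d) := by
            have h1 : (x:ℕ) + (T*s + s) = ((y:ℕ) + s) + d * (((x:ℕ)+T*s)/d) := by omega
            rw [h1, Nat.add_mul_div_left _ _ hd0]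
            ring
          have hstepy := hstep y
          rw [show (⟨((y:ℕ) + b) % d, Nat.mod_lt _ hd0⟩ : Fin d)
              = ⟨((x:ℕ) + (T*s + s)) % d, Nat.mod_lt _ hd0⟩ from Fin.ext hmod2] at hstepy
          rw [hstepy] at ih
          rw [ih]
          have hE1 : eC m (a * (k * (∑ t ∈ Finset.range T, (r:ℤ)^(((x:ℕ)+t*s)%d))))
              * eC m (a * (k * (r:ℤ)^(y:ℕ)))
              = eC m (a * (k * (∑ t ∈ Finset.range (T+1), (r:ℤ)^(((x:ℕ)+t*s)%d)))) := by
            rw [← eC_add, Finset.sum_range_succ]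
            exact eC_congr _ (by rw [hyv]; push_cast; ring)
          have hE2 : eC n' (l * ((T*q + ((x:ℕ)+T*s)/d : ℕ) : ℤ))
              * eC n' (l * ((((y:ℕ)+b)/d : ℕ) : ℤ))
              = eC n' (l * (((T+1)*q + ((x:ℕ)+(T*s + s))/d : ℕ) : ℤ)) := by
            rw [← eC_add]
            refine eC_congr _ ?_
            rw [hdiv2, hdiv3]
            have hTq : (T+1)*q = T*q + q := by ring
            rw [hTq]
            push_cast
            ring
          calc eC m (a * (k * (∑ t ∈ Finset.range T, (r:ℤ)^(((x:ℕ)+t*s)%d))))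
                * eC n' (l * ((T*q + ((x:ℕ)+T*s)/d : ℕ) : ℤ))
                * (eC m (a * (k * (r:ℤ)^(y:ℕ))) * eC (n/d) (l * ((((y:ℕ)+b)/d : ℕ) : ℤ))
                  * v ⟨((x:ℕ) + (T*s + s)) % d, Nat.mod_lt _ hd0⟩)
              = (eC m (a * (k * (∑ t ∈ Finset.range T, (r:ℤ)^(((x:ℕ)+t*s)%d))))
                  * eC m (a * (k * (r:ℤ)^(y:ℕ))))
                * (eC n' (l * ((T*q + ((x:ℕ)+T*s)/d : ℕ) : ℤ))
                  * eC n' (l * ((((y:ℕ)+b)/d : ℕ) : ℤ)))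
                * v ⟨((x:ℕ) + (T*s + s)) % d, Nat.mod_lt _ hd0⟩ := by ring
            _ = _ := by rw [hE1, hE2]
    have hfin := claim f
    have hmodf : ((x:ℕ) + f*s) % d = (x:ℕ) := by
      rw [hfs, Nat.add_mul_mod_self_left, Nat.mod_eq_of_lt x.isLt]
    have hdivf : ((x:ℕ) + f*s) / d = s / e := by
      rw [hfs, Nat.add_mul_div_left _ _ hd0, Nat.div_eq_of_lt x.isLt, Nat.zero_add]
    rw [show (⟨((x:ℕ) + f*s) % d, Nat.mod_lt _ hd0⟩ : Fin d) = x from Fin.ext hmodf] at hfin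
    rw [hdivf] at hfin
    by_contra hvx
    have hcoef1 : eC m (a * (k * (∑ t ∈ Finset.range f, (r:ℤ)^(((x:ℕ)+t*s)%d))))
        * eC n' (l * ((f*q + s/e : ℕ) : ℤ)) = 1 := by
      have h2 : (eC m (a * (k * (∑ t ∈ Finset.range f, (r:ℤ)^(((x:ℕ)+t*s)%d))))
          * eC n' (l * ((f*q + s/e : ℕ) : ℤ))) * v x = 1 * v x := by
        rw [one_mul, ← hfin]
      exact mul_right_cancel₀ hvx h2
    obtain ⟨-, hdn'⟩ := helper_nm hm hn'0 cmn' _ _ hcoef1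
    have c3 : ((n':ℕ):ℤ) ∣ ((f*q + s/e : ℕ) : ℤ) := cn'l.dvd_of_dvd_mul_left hdn'
    have c4 : n' ∣ f*q + s/e := by exact_mod_cast c3
    obtain ⟨p, hpdef⟩ : ∃ p, p = f.minFac := ⟨_, rfl⟩
    have hp : p.Prime := hpdef ▸ Nat.minFac_prime (by omega)
    have hpf : p ∣ f := hpdef ▸ Nat.minFac_dvd f
    have hpn' : p ∣ n' := hpq p hp (hpf.trans hfd)
    have hpsum : p ∣ f*q + s/e := hpn'.trans c4
    have hpse : p ∣ s/e := (Nat.dvd_add_right (Dvd.dvd.mul_right hpf q)).mp hpsum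
    have hgcd1 : p ∣ Nat.gcd (s/e) f := Nat.dvd_gcd hpse hpf
    rw [hcop] at hgcd1
    exact absurd (Nat.le_of_dvd Nat.one_pos hgcd1) (by have := hp.two_le; omega)

noncomputable def matUnit {d : ℕ} (M : Matrix (Fin d) (Fin d) ℂ) (t : ℕ) (h : M ^ (t+1) = 1) :
    Matrix.GeneralLinearGroup (Fin d) ℂ :=
  ⟨M, M^t, by rw [← pow_succ']; exact h, by rw [← pow_succ]; exact h⟩


/-- **The matrices `A₀`, `B₀` realize the irreducible fixed-point-free representation
`π_{k,l}` of the type I group with parameters `(m, n, r)`.**  They satisfy `A₀^m = 1`,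
`B₀^n = 1`, `B₀ A₀ B₀⁻¹ = A₀^r`; the subgroup of `GL(d, ℂ)` they generate has order `mn`;
its tautological `d`-dimensional representation is irreducible; and no element of this
subgroup other than the identity has `1` as an eigenvalue. -/
theorem typeI_representation_is_irreducible_without_fixed_points
    (m n r d : ℕ) (hm : 0 < m) (hn : 0 < n) (hr : 0 < r)
    (hrn : r ^ n ≡ 1 [MOD m]) (hcop : Nat.gcd (n * (r - 1)) m = 1)
    (hd : orderOf (r : ZMod m) = d) (hdn : d ∣ n)
    (hpq : ∀ p : ℕ, p.Prime → p ∣ d → p ∣ n / d)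
    (k l : ℤ) (hk : Int.gcd k (m : ℤ) = 1) (hl : Int.gcd l (n : ℤ) = 1) :
    typeIMatA m d r k ^ m = 1 ∧
    typeIMatB n d l ^ n = 1 ∧
    typeIMatB n d l * typeIMatA m d r k * (typeIMatB n d l)⁻¹ = typeIMatA m d r k ^ r ∧
    Nat.card (Subgroup.closure {g : Matrix.GeneralLinearGroup (Fin d) ℂ |
          (g : Matrix (Fin d) (Fin d) ℂ) = typeIMatA m d r k ∨
          (g : Matrix (Fin d) (Fin d) ℂ) = typeIMatB n d l}) = m * n ∧
    (∀ W : Submodule ℂ (Fin d → ℂ),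
      (∀ g ∈ Subgroup.closure {g : Matrix.GeneralLinearGroup (Fin d) ℂ |
          (g : Matrix (Fin d) (Fin d) ℂ) = typeIMatA m d r k ∨
          (g : Matrix (Fin d) (Fin d) ℂ) = typeIMatB n d l},
        ∀ w ∈ W, Matrix.mulVec (g : Matrix (Fin d) (Fin d) ℂ) w ∈ W) →
      W = ⊥ ∨ W = ⊤) ∧
    (∀ g ∈ Subgroup.closure {g : Matrix.GeneralLinearGroup (Fin d) ℂ |
          (g : Matrix (Fin d) (Fin d) ℂ) = typeIMatA m d r k ∨
          (g : Matrix (Fin d) (Fin d) ℂ) = typeIMatB n d l},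
      g ≠ 1 → ∀ v : Fin d → ℂ,
        Matrix.mulVec (g : Matrix (Fin d) (Fin d) ℂ) v = v → v = 0) := by
  -- basic positivity
  have hd0 : 0 < d := Nat.pos_of_ne_zero (by rintro rfl; exact hn.ne' (Nat.eq_zero_of_zero_dvd hdn))
  have hn'0 : 0 < n / d := Nat.div_pos (Nat.le_of_dvd hn hdn) hd0
  -- coprimality facts
  have cnm_nat : Nat.Coprime n m := Nat.Coprime.coprime_dvd_left (dvd_mul_right n (r-1)) hcop
  have crm1_nat : Nat.Coprime (r-1) m := Nat.Coprime.coprime_dvd_left (dvd_mul_left _ _) hcop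
  have cnm : IsCoprime (n:ℤ) (m:ℤ) := Nat.isCoprime_iff_coprime.mpr cnm_nat
  have crm1 : IsCoprime ((m:ℤ)) ((r:ℤ)-1) := by
    have h1 : IsCoprime (((r-1:ℕ)):ℤ) ((m:ℤ)) := Nat.isCoprime_iff_coprime.mpr crm1_nat
    have h2 : ((r-1:ℕ):ℤ) = (r:ℤ) - 1 := by
      push_cast [Nat.cast_sub hr]
      ring
    rw [h2] at h1
    exact h1.symm
  have ck : IsCoprime (m:ℤ) k := by
    rw [Int.isCoprime_iff_gcd_eq_one, Int.gcd_comm]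
    exact hk
  have cln : IsCoprime l (n:ℤ) := Int.isCoprime_iff_gcd_eq_one.mpr hl
  have hdvdnd : ((n/d:ℕ):ℤ) ∣ (n:ℤ) := Int.natCast_dvd_natCast.mpr (Nat.div_dvd_of_dvd hdn)
  have cn'l : IsCoprime ((n/d:ℕ):ℤ) l := (cln.symm.of_isCoprime_of_dvd_left hdvdnd)
  have cmn' : IsCoprime (m:ℤ) ((n/d : ℕ):ℤ) := cnm.symm.of_isCoprime_of_dvd_right hdvdnd
  have cr : IsCoprime (m:ℤ) (r:ℤ) := by
    obtain ⟨t, ht⟩ := (zmod_pow_one_iff m r d hd n).2 hdn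
    refine ⟨-t, (r:ℤ)^(n-1), ?_⟩
    have h1 : (r:ℤ)^(n-1) * r = (r:ℤ)^n := by
      rw [← pow_succ, show n - 1 + 1 = n by omega]
    rw [h1]
    have h2 : (r:ℤ)^n = 1 + m * t := by linarith
    rw [h2]
    ring
  -- matrix relations
  have hA1 : typeIMatA m d r k ^ m = 1 := matA_pow_m m n r d k hm
  have hB1 : typeIMatB n d l ^ n = 1 := matB_pow_n n d l hn hdn hd0
  have hBAB : typeIMatB n d l * typeIMatA m d r k * (typeIMatB n d l)⁻¹ = typeIMatA m d r k ^ r :=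
    matBAB m n r d k l hm hn hdn hd0 hd
  have hBA : typeIMatB n d l * typeIMatA m d r k = typeIMatA m d r k ^ r * typeIMatB n d l :=
    matBA m n r d k l hm hd0 hd
  refine ⟨hA1, hB1, hBAB, ?_⟩
  -- units
  set A := typeIMatA m d r k with hAdef
  set B := typeIMatB n d l with hBdef
  set AU : Matrix.GeneralLinearGroup (Fin d) ℂ :=
    matUnit A (m-1) (by rw [show m - 1 + 1 = m by omega]; exact hA1) with hAU
  set BU : Matrix.GeneralLinearGroup (Fin d) ℂ :=
    matUnit B (n-1) (by rw [show n - 1 + 1 = n by omega]; exact hB1) with hBU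
  have hAUval : (AU : Matrix (Fin d) (Fin d) ℂ) = A := rfl
  have hBUval : (BU : Matrix (Fin d) (Fin d) ℂ) = B := rfl
  set S := {g : Matrix.GeneralLinearGroup (Fin d) ℂ |
      (g : Matrix (Fin d) (Fin d) ℂ) = A ∨ (g : Matrix (Fin d) (Fin d) ℂ) = B} with hS
  have hAUmem : AU ∈ Subgroup.closure S := Subgroup.subset_closure (Or.inl rfl)
  have hBUmem : BU ∈ Subgroup.closure S := Subgroup.subset_closure (Or.inr rfl)
  -- unit-level relations
  have hAUm : AU ^ m = 1 := by
    apply Units.ext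
    rw [Units.val_pow_eq_pow_val, hAUval, hA1]
    rfl
  have hBUn : BU ^ n = 1 := by
    apply Units.ext
    rw [Units.val_pow_eq_pow_val, hBUval, hB1]
    rfl
  have hBAU : BU * AU = AU ^ r * BU := by
    apply Units.ext
    rw [Units.val_mul, Units.val_mul, Units.val_pow_eq_pow_val, hAUval, hBUval]
    exact hBA
  -- commutation of powers
  have hcomm : ∀ (b a' : ℕ), BU ^ b * AU ^ a' = AU ^ (a' * r ^ b) * BU ^ b := by
    have hsemi : ∀ a' : ℕ, BU * AU ^ a' = AU ^ (a' * r) * BU := by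
      intro a'
      have := (SemiconjBy.pow_right hBAU a')
      rw [SemiconjBy] at this
      rw [this, ← pow_mul]
      ring_nf
    intro b
    induction b with
    | zero => intro a'; simp
    | succ b ih =>
        intro a'
        have h1 : BU ^ (b+1) * AU ^ a' = BU ^ b * (BU * AU ^ a') := by
          rw [pow_succ, mul_assoc]
        rw [h1, hsemi a', ← mul_assoc, ih (a' * r), mul_assoc, ← pow_succ]
        congr 2
        rw [pow_succ]
        ring
  have hAUmod : ∀ t : ℕ, AU ^ t = AU ^ (t % m) := by
    intro t
    conv_lhs => rw [← Nat.div_add_mod t m]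
    rw [pow_add, pow_mul, hAUm, one_pow, one_mul]
  have hBUmod : ∀ t : ℕ, BU ^ t = BU ^ (t % n) := by
    intro t
    conv_lhs => rw [← Nat.div_add_mod t n]
    rw [pow_add, pow_mul, hBUn, one_pow, one_mul]
  -- normal form
  have hnf : ∀ g ∈ Subgroup.closure S, ∃ a b : ℕ, g = AU ^ a * BU ^ b := by
    intro g hg
    induction hg using Subgroup.closure_induction with
    | mem g hgS =>
        rcases hgS with h | h
        · exact ⟨1, 0, by rw [pow_one, pow_zero, mul_one]; exact Units.ext (by rw [hAUval]; exact h)⟩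
        · exact ⟨0, 1, by rw [pow_one, pow_zero, one_mul]; exact Units.ext (by rw [hBUval]; exact h)⟩
    | one => exact ⟨0, 0, by simp⟩
    | mul g h _ _ ihg ihh =>
        obtain ⟨a, b, rfl⟩ := ihg
        obtain ⟨a', b', rfl⟩ := ihh
        refine ⟨a + a' * r ^ b, b + b', ?_⟩
        rw [show AU^a * BU^b * (AU^a' * BU^b') = AU^a * ((BU^b * AU^a') * BU^b') by
          simp only [mul_assoc], hcomm b a']
        simp only [pow_add, mul_assoc]
    | inv g _ ihg =>
        obtain ⟨a, b, rfl⟩ := ihg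
        refine ⟨a * (m-1) * r ^ (b * (n-1)), b * (n-1), ?_⟩
        rw [← hcomm]
        apply inv_eq_of_mul_eq_one_right
        rw [mul_assoc, ← mul_assoc (BU ^ b), ← pow_add]
        have hbn : b + b * (n-1) = n * b := by
          calc b + b * (n-1) = b * 1 + b * (n-1) := by rw [Nat.mul_one]
            _ = b * (1 + (n-1)) := (Nat.mul_add b 1 (n-1)).symm
            _ = b * n := by rw [show 1 + (n-1) = n by omega]
            _ = n * b := Nat.mul_comm b n
        rw [hbn, pow_mul, hBUn, one_pow, one_mul, ← pow_add]
        have ham : a + a * (m-1) = m * a := by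
          calc a + a * (m-1) = a * 1 + a * (m-1) := by rw [Nat.mul_one]
            _ = a * (1 + (m-1)) := (Nat.mul_add a 1 (m-1)).symm
            _ = a * m := by rw [show 1 + (m-1) = m by omega]
            _ = m * a := Nat.mul_comm a m
        rw [ham, pow_mul, hAUm, one_pow]
  -- shared facts
  haveI : NeZero m := ⟨hm.ne'⟩
  haveI : NeZero n := ⟨hn.ne'⟩
  have hval_eq : ∀ (a b : ℕ), ((AU^a * BU^b : Matrix.GeneralLinearGroup (Fin d) ℂ)
      : Matrix (Fin d) (Fin d) ℂ) = A^a * B^b := by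
    intro a b
    rw [Units.val_mul, Units.val_pow_eq_pow_val, Units.val_pow_eq_pow_val, hAUval, hBUval]
  have hinj : ∀ {a a' b b' : ℕ}, a < m → a' < m → b < n → b' < n →
      AU^a * BU^b = AU^a' * BU^b' → a = a' ∧ b = b' := by
    intro a a' b b' ha ha' hb hb' hgg
    refine mat_inj m n r d k l hm hn hd hdn hd0 ck crm1 cmn' cn'l ha ha' hb hb' ?_
    rw [← hval_eq, ← hval_eq, hgg]
  refine ⟨?_, ?_, ?_⟩
  · -- cardinality
    let F : ZMod m × ZMod n → (Subgroup.closure S) := fun p =>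
      ⟨AU ^ (p.1.val) * BU ^ (p.2.val), mul_mem (pow_mem hAUmem _) (pow_mem hBUmem _)⟩
    have hFbij : Function.Bijective F := by
      constructor
      · intro p p' hpp
        have h1 : AU ^ (p.1.val) * BU ^ (p.2.val) = AU ^ (p'.1.val) * BU ^ (p'.2.val) :=
          congrArg Subtype.val hpp
        obtain ⟨h2, h3⟩ := hinj (ZMod.val_lt _) (ZMod.val_lt _) (ZMod.val_lt _) (ZMod.val_lt _) h1
        have e1 : p.1 = p'.1 := ZMod.val_injective _ h2
        have e2 : p.2 = p'.2 := ZMod.val_injective _ h3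
        exact Prod.ext e1 e2
      · rintro ⟨g, hg⟩
        obtain ⟨a, b, rfl⟩ := hnf g hg
        refine ⟨((a : ZMod m), (b : ZMod n)), ?_⟩
        apply Subtype.ext
        show AU ^ (((a : ZMod m)).val) * BU ^ (((b : ZMod n)).val) = AU^a * BU^b
        rw [ZMod.val_natCast, ZMod.val_natCast, ← hAUmod, ← hBUmod]
    have hc := Nat.card_eq_of_bijective F hFbij
    rw [← hc, Nat.card_prod, Nat.card_zmod, Nat.card_zmod]
  · -- irreducibility
    intro W hW
    by_cases hWbot : W = ⊥
    · exact Or.inl hWbot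
    refine Or.inr ?_
    obtain ⟨w, hwW, hw0⟩ := Submodule.exists_mem_ne_zero_of_ne_bot hWbot
    obtain ⟨j, hj⟩ : ∃ j : Fin d, w j ≠ 0 := by
      by_contra hcon
      push_neg at hcon
      exact hw0 (funext fun i => hcon i)
    have invA : ∀ u ∈ W, A.mulVec u ∈ W := fun u hu => hW AU hAUmem u hu
    have invB : ∀ u ∈ W, B.mulVec u ∈ W := fun u hu => hW BU hBUmem u hu
    -- injectivity of the diagonal of A
    have keyinj : ∀ u w : ℕ, u ≤ w → w < d →
        eC m (k*(r:ℤ)^w) = eC m (k*(r:ℤ)^u) → w = u := by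
      intro u w huw hwd hE
      have h1 : (m:ℤ) ∣ k*((r:ℤ)^w - (r:ℤ)^u) := by
        have h := (eC_eq_iff hm _ _).1 hE
        convert h using 1
        ring
      have h2 : (m:ℤ) ∣ (r:ℤ)^w - (r:ℤ)^u := ck.dvd_of_dvd_mul_left h1
      have h3 : (r:ℤ)^w - (r:ℤ)^u = ((r:ℤ)^(w-u) - 1) * (r:ℤ)^u := by
        rw [sub_mul, ← pow_add, show w - u + u = w by omega]
        ring
      rw [h3] at h2
      have h4 : (m:ℤ) ∣ (r:ℤ)^(w-u) - 1 := (cr.pow_right).dvd_of_dvd_mul_right h2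
      have h5 : d ∣ (w-u) := (zmod_pow_one_iff m r d hd _).1 h4
      have h6 : w - u = 0 := Nat.eq_zero_of_dvd_of_lt h5 (by omega)
      omega
    have αinj : ∀ x y : Fin d, eC m (k*(r:ℤ)^(x:ℕ)) = eC m (k*(r:ℤ)^(y:ℕ)) → x = y := by
      intro x y hxy
      rcases le_total (y:ℕ) (x:ℕ) with hch | hch
      · exact Fin.ext (keyinj _ _ hch x.isLt hxy)
      · exact Fin.ext (keyinj _ _ hch y.isLt hxy.symm).symm
    -- taking components
    have hXA : ∀ u, u ∈ W → ∀ i : Fin d,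
        (fun x : Fin d => (eC m (k*(r:ℤ)^(x:ℕ)) - eC m (k*(r:ℤ)^(i:ℕ))) * u x) ∈ W := by
      intro u hu i
      have h2 : A.mulVec u - (eC m (k*(r:ℤ)^(i:ℕ))) • u ∈ W :=
        Submodule.sub_mem _ (invA u hu) (Submodule.smul_mem _ _ hu)
      convert h2 using 1
      funext x
      rw [Pi.sub_apply, Pi.smul_apply, smul_eq_mul, hAdef, matA_eq, Matrix.mulVec_diagonal]
      ring
    have extract : ∀ N : ℕ, ∀ u, u ∈ W → ∀ j : Fin d, u j ≠ 0 →
        (Finset.univ.filter (fun i => u i ≠ 0)).card ≤ N → Pi.single j (1:ℂ) ∈ W := by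
      intro N
      induction N with
      | zero =>
          intro u hu j huj hcard
          exfalso
          have : j ∈ Finset.univ.filter (fun i => u i ≠ 0) := by
            simp [Finset.mem_filter, huj]
          have := Finset.card_pos.2 ⟨j, this⟩
          omega
      | succ N ih =>
          intro u hu j huj hcard
          by_cases hsupp : ∀ i, i ≠ j → u i = 0
          · have heq : Pi.single j (1:ℂ) = (u j)⁻¹ • u := by
              funext i
              by_cases hij : i = j
              · subst hij
                rw [Pi.single_eq_same, Pi.smul_apply, smul_eq_mul, inv_mul_cancel₀ huj]
              · rw [Pi.single_eq_of_ne hij, Pi.smul_apply, smul_eq_mul, hsupp i hij, mul_zero]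
            rw [heq]
            exact Submodule.smul_mem _ _ hu
          · push_neg at hsupp
            obtain ⟨i, hij, hui⟩ := hsupp
            have hu' := hXA u hu i
            refine ih _ hu' j ?_ ?_
            · refine mul_ne_zero (sub_ne_zero.2 ?_) huj
              intro hc
              exact hij (αinj _ _ (by rw [hc])).symm
            · have hsub : (Finset.univ.filter
                  (fun x : Fin d => (eC m (k*(r:ℤ)^(x:ℕ)) - eC m (k*(r:ℤ)^(i:ℕ))) * u x ≠ 0))
                  ⊆ (Finset.univ.filter (fun x => u x ≠ 0)).erase i := by
                intro t ht
                rw [Finset.mem_filter] at ht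
                rw [Finset.mem_erase, Finset.mem_filter]
                refine ⟨?_, Finset.mem_univ _, ?_⟩
                · rintro rfl
                  exact ht.2 (by rw [sub_self, zero_mul])
                · intro hc
                  exact ht.2 (by rw [hc, mul_zero])
              have hle := Finset.card_le_card hsub
              have hmem : i ∈ Finset.univ.filter (fun x => u x ≠ 0) := by
                simp [Finset.mem_filter, hui]
              rw [Finset.card_erase_of_mem hmem] at hle
              omega
    have hsingj : Pi.single j (1:ℂ) ∈ W :=
      extract _ w hwW j hj le_rfl
    -- B-iterates
    have invBpow : ∀ t : ℕ, ∀ u, u ∈ W → (B^t).mulVec u ∈ W := by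
      intro t
      induction t with
      | zero =>
          intro u hu
          rw [pow_zero, Matrix.one_mulVec]
          exact hu
      | succ t ih =>
          intro u hu
          rw [pow_succ', ← Matrix.mulVec_mulVec]
          exact invB _ (ih u hu)
    have hsingles : ∀ i : Fin d, Pi.single i (1:ℂ) ∈ W := by
      intro i
      obtain ⟨t, ht⟩ : ∃ t, t = d + (j:ℕ) - (i:ℕ) := ⟨_, rfl⟩
      have hit : ((i:ℕ) + t) % d = (j:ℕ) := by
        have h1 : (i:ℕ) + t = (j:ℕ) + d * 1 := by
          have := i.isLt; have := j.isLt; omega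
        rw [h1, Nat.add_mul_mod_self_left, Nat.mod_eq_of_lt j.isLt]
      set c := eC (n/d) (l * ((((i:ℕ)+t)/d : ℕ) : ℤ)) with hcdef
      have hBt : (B^t).mulVec (Pi.single j (1:ℂ)) = c • (Pi.single i (1:ℂ) : Fin d → ℂ) := by
        funext x
        have hx1 : (B^t).mulVec (Pi.single j (1:ℂ)) x = (B^t) x j := by
          rw [Matrix.mulVec, dotProduct]
          rw [Finset.sum_eq_single j]
          · rw [Pi.single_eq_same, mul_one]
          · intro t' _ ht'
            rw [Pi.single_eq_of_ne ht', mul_zero]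
          · intro hj'
            exact absurd (Finset.mem_univ _) hj'
        have hx2 : (B^t) x j = (A^0 * B^t) x j := by rw [pow_zero, one_mul]
        rw [hx1, hx2, hBdef, hAdef, matAB]
        rw [Pi.smul_apply, Pi.single_apply, smul_eq_mul]
        by_cases hx : x = i
        · subst hx
          rw [if_pos hit.symm, if_pos rfl, mul_one, Nat.cast_zero, zero_mul, eC_zero, one_mul]
        · rw [if_neg, if_neg hx, mul_zero]
          intro hc
          apply hx
          have h1 : ((x:ℕ) + t) % d = ((i:ℕ) + t) % d := by rw [hit, ← hc]
          have h2 : (x:ℕ) % d = (i:ℕ) % d := Nat.ModEq.add_right_cancel' t h1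
          rw [Nat.mod_eq_of_lt x.isLt, Nat.mod_eq_of_lt i.isLt] at h2
          exact Fin.ext h2
      have hcW : c • (Pi.single i (1:ℂ) : Fin d → ℂ) ∈ W := by
        rw [← hBt]
        exact invBpow t _ hsingj
      have := Submodule.smul_mem W c⁻¹ hcW
      rwa [smul_smul, inv_mul_cancel₀ (eC_ne_zero _ _), one_smul] at this
    rw [Submodule.eq_top_iff']
    intro v
    have hv : v = ∑ i : Fin d, v i • (Pi.single i (1:ℂ) : Fin d → ℂ) := by
      funext x
      rw [Finset.sum_apply]
      rw [Finset.sum_eq_single x]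
      · rw [Pi.smul_apply, Pi.single_eq_same, smul_eq_mul, mul_one]
      · intro t' _ ht'
        rw [Pi.smul_apply, Pi.single_eq_of_ne (Ne.symm ht'), smul_eq_mul, mul_zero]
      · intro hx'
        exact absurd (Finset.mem_univ _) hx'
    rw [hv]
    exact Submodule.sum_mem _ (fun i _ => Submodule.smul_mem _ _ (hsingles i))
  · -- fixed point freeness
    intro g hg hg1 v hv
    obtain ⟨a, b, rfl⟩ := hnf g hg
    have hgu : AU^a * BU^b = AU^(a % m) * BU^(b % n) := by rw [← hAUmod, ← hBUmod]
    rw [hgu] at hv hg1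
    rw [hval_eq] at hv
    refine mat_fpf m n r d k l hm hn hd hdn hd0 hpq cmn' cn'l ck cr
      (Nat.mod_lt _ hm) (Nat.mod_lt _ hn) ?_ v hv
    rintro ⟨h1, h2⟩
    rw [h1, h2, pow_zero, pow_zero, mul_one] at hg1
    exact hg1 rfl
end
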